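/- arXiv:1911.02232 — 3 statements merged into one kernel-verified Lean document; each statement's English description precedes it below -/
import Mathlib

section
/- Let L be an irreducible strictly sub-Laplacian n×n real matrix and let Q = diag(q_1, …, q_n) be a real diagonal matrix. Then the function μ ↦ s(Q − μL) is convex on (0, ∞); moreover it is strictly convex on (0, ∞) if and only if the q_i are not all equal. -/
open Matrix Filter

/-- The spectral bound of a real square matrix: the maximum of the real parts of its
complex eigenvalues. -/
noncomputable def specBound {n : ℕ} (M : Matrix (Fin n) (Fin n) ℝ) : ℝ :=
  sSup (Complex.re '' spectrum ℂ (M.map Complex.ofReal))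

/-- The spectral radius of a real square matrix: the maximum of the absolute values of its
complex eigenvalues. -/
noncomputable def specRad {n : ℕ} (M : Matrix (Fin n) (Fin n) ℝ) : ℝ :=
  sSup ((fun z : ℂ => ‖z‖) '' spectrum ℂ (M.map Complex.ofReal))

/-- A matrix is irreducible if for every nonempty proper subset `S` of indices there are
`i ∉ S` and `j ∈ S` with `A i j ≠ 0`. -/
def MatIrreducible {n : ℕ} (A : Matrix (Fin n) (Fin n) ℝ) : Prop :=
  ∀ S : Finset (Fin n), S.Nonempty → S ≠ Finset.univ →
    ∃ i ∉ S, ∃ j ∈ S, A i j ≠ 0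

lemma mem_spectrum_iff_eig {n : ℕ} (A : Matrix (Fin n) (Fin n) ℂ) (lam : ℂ) :
    lam ∈ spectrum ℂ A ↔ ∃ v, v ≠ 0 ∧ A *ᵥ v = lam • v := by
  rw [spectrum.mem_iff]
  constructor
  · intro h
    have hdet : (lam • (1 : Matrix (Fin n) (Fin n) ℂ) - A).det = 0 := by
      by_contra hd
      exact h (by
        rw [Algebra.algebraMap_eq_smul_one]
        exact (Matrix.isUnit_iff_isUnit_det _).mpr (isUnit_iff_ne_zero.mpr hd))
    obtain ⟨v, hv0, hv⟩ := Matrix.exists_mulVec_eq_zero_iff.mpr hdet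
    rw [Matrix.sub_mulVec, Matrix.smul_mulVec, Matrix.one_mulVec, sub_eq_zero] at hv
    exact ⟨v, hv0, hv.symm⟩
  · rintro ⟨v, hv0, hv⟩
    intro hU
    rw [Algebra.algebraMap_eq_smul_one] at hU
    obtain ⟨u, hu⟩ := hU
    have hz : (lam • (1 : Matrix (Fin n) (Fin n) ℂ) - A) *ᵥ v = 0 := by
      rw [Matrix.sub_mulVec, Matrix.smul_mulVec, Matrix.one_mulVec, hv, sub_self]
    have hv' : v = 0 := by
      have h1 : ((↑u⁻¹ : Matrix (Fin n) (Fin n) ℂ) * (lam • 1 - A)) *ᵥ v = 0 := by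
        rw [← Matrix.mulVec_mulVec, hz, Matrix.mulVec_zero]
      rw [← hu, u.inv_mul, Matrix.one_mulVec] at h1
      exact h1
    exact hv0 hv'

lemma map_mulVec_ofReal {n : ℕ} (M : Matrix (Fin n) (Fin n) ℝ) (z : Fin n → ℝ) (i : Fin n) :
    ((M.map Complex.ofReal) *ᵥ (fun j => (z j : ℂ))) i = ((M *ᵥ z) i : ℂ) := by
  simp only [Matrix.mulVec, dotProduct, Matrix.map_apply]
  push_cast
  rfl

/-- If a Metzler matrix has a strictly positive eigenvector, the eigenvalue is the
spectral bound. -/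
lemma specBound_eq_of_pos_eigenvector {n : ℕ} (hn : 0 < n) (M : Matrix (Fin n) (Fin n) ℝ)
    (hoff : ∀ i j, i ≠ j → 0 ≤ M i j) (z : Fin n → ℝ) (hz : ∀ i, 0 < z i) (r : ℝ)
    (heig : M *ᵥ z = r • z) : specBound M = r := by
  haveI : Nonempty (Fin n) := ⟨⟨0, hn⟩⟩
  have hmem : (r : ℂ) ∈ spectrum ℂ (M.map Complex.ofReal) := by
    rw [mem_spectrum_iff_eig]
    refine ⟨fun i => (z i : ℂ), ?_, ?_⟩
    · intro h
      have := congrFun h (Classical.arbitrary (Fin n))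
      simp only [Pi.zero_apply, Complex.ofReal_eq_zero] at this
      exact (hz _).ne' this
    · funext i
      rw [map_mulVec_ofReal, congrFun heig i]
      simp only [Pi.smul_apply, smul_eq_mul]
      push_cast
      ring
  have hub : ∀ w ∈ Complex.re '' spectrum ℂ (M.map Complex.ofReal), w ≤ r := by
    rintro w ⟨lam, hlam, rfl⟩
    obtain ⟨v, hv0, hv⟩ := (mem_spectrum_iff_eig _ _).mp hlam
    obtain ⟨i, _, hi⟩ := Finset.exists_max_image Finset.univ
      (fun i => ‖v i‖ / z i) Finset.univ_nonempty
    have hvi : 0 < ‖v i‖ := by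
      obtain ⟨j, hj⟩ : ∃ j, v j ≠ 0 := by
        by_contra h; push_neg at h; exact hv0 (funext h)
      have h1 : 0 < ‖v j‖ / z j := div_pos (norm_pos_iff.mpr hj) (hz j)
      have h3 : 0 < ‖v i‖ / z i := lt_of_lt_of_le h1 (hi j (Finset.mem_univ j))
      have h4 : ‖v i‖ = ‖v i‖ / z i * z i :=
        (div_mul_cancel₀ _ (hz i).ne').symm
      rw [h4]; exact mul_pos h3 (hz i)
    -- key estimate
    have hrow : ∀ j, j ≠ i → ‖v j‖ ≤ z j * (‖v i‖ / z i) := by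
      intro j _
      have h5 := hi j (Finset.mem_univ j)
      rw [div_le_div_iff₀ (hz j) (hz i)] at h5
      rw [mul_div_assoc', le_div_iff₀ (hz i)]
      linear_combination h5
    have heq_i : (lam - (M i i : ℂ)) * v i = ∑ j ∈ Finset.univ.erase i, (M i j : ℂ) * v j := by
      have h1 := congrFun hv i
      simp only [Matrix.mulVec, dotProduct, Matrix.map_apply, Pi.smul_apply,
        smul_eq_mul] at h1
      rw [← Finset.add_sum_erase _ _ (Finset.mem_univ i)] at h1
      linear_combination -h1
    have hsum_z : ∑ j ∈ Finset.univ.erase i, M i j * z j = r * z i - M i i * z i := by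
      have h6 := congrFun heig i
      simp only [Matrix.mulVec, dotProduct, Pi.smul_apply, smul_eq_mul] at h6
      rw [← Finset.add_sum_erase _ _ (Finset.mem_univ i)] at h6
      linarith
    have habs : ‖lam - (M i i : ℂ)‖ * ‖v i‖ ≤ (r - M i i) * ‖v i‖ := by
      have h2 : ‖(lam - (M i i : ℂ)) * v i‖ ≤
          ∑ j ∈ Finset.univ.erase i, M i j * ‖v j‖ := by
        rw [heq_i]
        refine (norm_sum_le _ _).trans (le_of_eq ?_)
        refine Finset.sum_congr rfl fun j hj => ?_
        rw [norm_mul, Complex.norm_real, Real.norm_eq_abs,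
          abs_of_nonneg (hoff i j (Finset.ne_of_mem_erase hj).symm)]
      have h3' : ∑ j ∈ Finset.univ.erase i, M i j * ‖v j‖ ≤
          ∑ j ∈ Finset.univ.erase i, M i j * (z j * (‖v i‖ / z i)) := by
        refine Finset.sum_le_sum fun j hj => ?_
        exact mul_le_mul_of_nonneg_left (hrow j (Finset.ne_of_mem_erase hj))
          (hoff i j (Finset.ne_of_mem_erase hj).symm)
      have h4' : ∑ j ∈ Finset.univ.erase i, M i j * (z j * (‖v i‖ / z i)) =
          (r - M i i) * ‖v i‖ := by
        rw [show (∑ j ∈ Finset.univ.erase i, M i j * (z j * (‖v i‖ / z i)))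
            = (∑ j ∈ Finset.univ.erase i, M i j * z j) * (‖v i‖ / z i) by
          rw [Finset.sum_mul]; exact Finset.sum_congr rfl fun j _ => by ring]
        rw [hsum_z, mul_div_assoc', div_eq_iff (hz i).ne']
        ring
      calc ‖lam - (M i i : ℂ)‖ * ‖v i‖
          = ‖(lam - (M i i : ℂ)) * v i‖ := (norm_mul _ _).symm
        _ ≤ _ := h2.trans (h3'.trans h4'.le)
    have hcancel : ‖lam - (M i i : ℂ)‖ ≤ r - M i i :=
      le_of_mul_le_mul_right habs hvi
    have hre : (lam - (M i i : ℂ)).re ≤ ‖lam - (M i i : ℂ)‖ :=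
      Complex.re_le_norm _
    have : lam.re - M i i ≤ r - M i i := by
      simpa [Complex.sub_re, Complex.ofReal_re] using hre.trans hcancel
    linarith
  exact le_antisymm (csSup_le ⟨r, ⟨(r:ℂ), hmem, Complex.ofReal_re r⟩⟩ hub)
    (le_csSup ⟨r, hub⟩ ⟨(r:ℂ), hmem, Complex.ofReal_re r⟩)


section grow
variable {n : ℕ} (A : Matrix (Fin n) (Fin n) ℝ)

lemma mulVec_nonneg (hA : ∀ i j, 0 ≤ A i j) (u : Fin n → ℝ) (hu : ∀ i, 0 ≤ u i) :
    ∀ i, 0 ≤ (A *ᵥ u) i := fun i => by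
  simp only [Matrix.mulVec, dotProduct]
  exact Finset.sum_nonneg fun j _ => mul_nonneg (hA i j) (hu j)

lemma one_add_mulVec (u : Fin n → ℝ) (i : Fin n) :
    ((1 + A) *ᵥ u) i = u i + (A *ᵥ u) i := by
  rw [Matrix.add_mulVec, Matrix.one_mulVec]; rfl

lemma pos_pow_mulVec (hA : ∀ i j, 0 ≤ A i j) (k : ℕ) (u : Fin n → ℝ)
    (hu : ∀ i, 0 < u i) : ∀ i, 0 < (((1 + A) ^ k) *ᵥ u) i := by
  induction k generalizing u with
  | zero => simpa [Matrix.one_mulVec] using hu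
  | succ k ih =>
    intro i
    have h1 : ∀ i, 0 < ((1 + A) *ᵥ u) i := fun i => by
      rw [one_add_mulVec]
      have h2 := mulVec_nonneg A hA u (fun i => (hu i).le) i
      have h3 := hu i
      linarith
    have : ((1 + A) ^ (k + 1)) *ᵥ u = ((1 + A) ^ k) *ᵥ ((1 + A) *ᵥ u) := by
      rw [Matrix.mulVec_mulVec, ← pow_succ]
    rw [this]
    exact ih _ h1 i

open Classical in
lemma grow_mulVec (hA : ∀ i j, 0 ≤ A i j) (hirr : MatIrreducible A) :
    ∀ (k : ℕ) (u : Fin n → ℝ), (∀ i, 0 ≤ u i) → u ≠ 0 →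
      n ≤ k + (Finset.univ.filter (fun i => 0 < u i)).card →
      ∀ i, 0 < (((1 + A) ^ k) *ᵥ u) i := by
  intro k
  induction k with
  | zero =>
    intro u hu hu0 hcard i
    have : (Finset.univ.filter (fun i => 0 < u i)) = Finset.univ := by
      apply Finset.eq_univ_of_card
      have h1 := Finset.card_le_card (Finset.filter_subset (fun i => 0 < u i) Finset.univ)
      rw [Finset.card_univ, Fintype.card_fin] at h1
      rw [Fintype.card_fin]
      omega
    have h2 : ∀ j, 0 < u j := fun j =>
      (Finset.mem_filter.mp (Finset.eq_univ_iff_forall.mp this j)).2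
    simpa [Matrix.one_mulVec] using h2 i
  | succ k ih =>
    intro u hu hu0 hcard i
    set S := Finset.univ.filter (fun i => 0 < u i) with hS
    have hSne : S.Nonempty := by
      obtain ⟨j, hj⟩ : ∃ j, u j ≠ 0 := by
        by_contra h; push_neg at h; exact hu0 (funext h)
      exact ⟨j, Finset.mem_filter.mpr ⟨Finset.mem_univ j, (hu j).lt_of_ne' hj⟩⟩
    have hrw : ((1 + A) ^ (k + 1)) *ᵥ u = ((1 + A) ^ k) *ᵥ ((1 + A) *ᵥ u) := by
      rw [Matrix.mulVec_mulVec, ← pow_succ]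
    by_cases hSu : S = Finset.univ
    · have h2 : ∀ j, 0 < u j := fun j =>
        (Finset.mem_filter.mp (Finset.eq_univ_iff_forall.mp hSu j)).2
      exact pos_pow_mulVec A hA (k + 1) u h2 i
    · obtain ⟨i0, hi0, j0, hj0, hAij⟩ := hirr S hSne hSu
      set v := (1 + A) *ᵥ u with hv
      have hvn : ∀ i, 0 ≤ v i := fun i => by
        rw [hv, one_add_mulVec]
        exact add_nonneg (hu i) (mulVec_nonneg A hA u hu i)
      have hgrow : ∀ j ∈ S, 0 < v j := fun j hj => by
        rw [hv, one_add_mulVec]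
        have := mulVec_nonneg A hA u hu j
        have := (Finset.mem_filter.mp hj).2
        linarith
      have hvi0 : 0 < v i0 := by
        rw [hv, one_add_mulVec]
        have h3 : A i0 j0 * u j0 ≤ (A *ᵥ u) i0 := by
          apply Finset.single_le_sum (f := fun j => A i0 j * u j)
            (fun j _ => mul_nonneg (hA i0 j) (hu j)) (Finset.mem_univ j0)
        have h4 : 0 < A i0 j0 * u j0 :=
          mul_pos ((hA i0 j0).lt_of_ne' hAij) (Finset.mem_filter.mp hj0).2
        have := hu i0
        linarith
      have hsub : insert i0 S ⊆ Finset.univ.filter (fun i => 0 < v i) := by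
        intro x hx
        rcases Finset.mem_insert.mp hx with h | h
        · exact Finset.mem_filter.mpr ⟨Finset.mem_univ _, h ▸ hvi0⟩
        · exact Finset.mem_filter.mpr ⟨Finset.mem_univ _, hgrow x h⟩
      have hcard2 : n ≤ k + (Finset.univ.filter (fun i => 0 < v i)).card := by
        have h5 := Finset.card_le_card hsub
        rw [Finset.card_insert_of_notMem hi0] at h5
        omega
      have hv0 : v ≠ 0 := by
        intro h
        have := congrFun h i0
        simp only [Pi.zero_apply] at this
        exact hvi0.ne' this
      rw [hrw]
      exact ih v hvn hv0 hcard2 i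
end grow

lemma perron_B {n : ℕ} (hn : 0 < n) (B : Matrix (Fin n) (Fin n) ℝ)
    (HB : ∀ u : Fin n → ℝ, (∀ i, 0 ≤ u i) → u ≠ 0 → ∀ i, 0 < (B *ᵥ u) i) :
    ∃ t : ℝ, ∃ u : Fin n → ℝ, 0 < t ∧ (∀ i, 0 < u i) ∧ B *ᵥ u = t • u := by
  haveI : Nonempty (Fin n) := ⟨⟨0, hn⟩⟩
  have hnR : (0 : ℝ) < n := Nat.cast_pos.mpr hn
  set C : ℝ := ∑ i, ∑ j, |B i j| with hC
  have hC0 : 0 ≤ C := Finset.sum_nonneg fun i _ => Finset.sum_nonneg fun j _ => abs_nonneg _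
  set T : ℝ := n * C with hT
  have hT0 : 0 ≤ T := mul_nonneg hnR.le hC0
  -- a priori bound
  have BND : ∀ t : ℝ, ∀ u : Fin n → ℝ, 0 ≤ t → (∀ i, 0 ≤ u i) → (∑ i, u i) = 1 →
      (∀ i, t * u i ≤ (B *ᵥ u) i) → t ≤ T := by
    intro t u ht hu hsum hineq
    obtain ⟨i, hi⟩ : ∃ i, (n : ℝ)⁻¹ ≤ u i := by
      by_contra h
      push_neg at h
      have : (∑ i, u i) < ∑ _i : Fin n, (n : ℝ)⁻¹ :=
        Finset.sum_lt_sum_of_nonempty Finset.univ_nonempty fun i _ => h i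
      rw [hsum, Finset.sum_const, Finset.card_univ, Fintype.card_fin, nsmul_eq_mul,
        mul_inv_cancel₀ hnR.ne'] at this
      exact lt_irrefl _ this
    have hu1 : ∀ j, u j ≤ 1 := by
      intro j
      calc u j ≤ ∑ i, u i := Finset.single_le_sum (fun i _ => hu i) (Finset.mem_univ j)
        _ = 1 := hsum
    have h1 : (B *ᵥ u) i ≤ C := by
      have : (B *ᵥ u) i = ∑ j, B i j * u j := rfl
      rw [this]
      calc ∑ j, B i j * u j ≤ ∑ j, |B i j| := by
            refine Finset.sum_le_sum fun j _ => ?_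
            calc B i j * u j ≤ |B i j * u j| := le_abs_self _
              _ = |B i j| * |u j| := abs_mul _ _
              _ ≤ |B i j| * 1 := by
                  refine mul_le_mul_of_nonneg_left ?_ (abs_nonneg _)
                  rw [abs_of_nonneg (hu j)]; exact hu1 j
              _ = |B i j| := mul_one _
        _ ≤ C := Finset.single_le_sum
            (f := fun i => ∑ j, |B i j|)
            (fun i _ => Finset.sum_nonneg fun j _ => abs_nonneg _) (Finset.mem_univ i)
    have h2 : t * (n : ℝ)⁻¹ ≤ C := le_trans (mul_le_mul_of_nonneg_left hi ht) (le_trans (hineq i) h1)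
    calc t = t * (n : ℝ)⁻¹ * n := by field_simp
      _ ≤ C * n := mul_le_mul_of_nonneg_right h2 hnR.le
      _ = T := by rw [hT]; ring
  -- the compact set K
  set K : Set (ℝ × (Fin n → ℝ)) := {p | 0 ≤ p.1 ∧ p.1 ≤ T ∧ (∀ i, 0 ≤ p.2 i) ∧
    (∑ i, p.2 i) = 1 ∧ ∀ i, p.1 * p.2 i ≤ (B *ᵥ p.2) i} with hK
  have hclosed : IsClosed K := by
    rw [hK]
    simp only [Set.setOf_and, Set.setOf_forall]
    refine IsClosed.inter (isClosed_le continuous_const continuous_fst)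
      (IsClosed.inter (isClosed_le continuous_fst continuous_const)
       (IsClosed.inter (isClosed_iInter fun i => isClosed_le continuous_const
          ((continuous_apply i).comp continuous_snd))
        (IsClosed.inter (isClosed_eq (continuous_finset_sum _ fun i _ =>
            (continuous_apply i).comp continuous_snd) continuous_const)
         (isClosed_iInter fun i => ?_))))
    have e2 : {p : ℝ × (Fin n → ℝ) | p.1 * p.2 i ≤ (B *ᵥ p.2) i} =
        {p : ℝ × (Fin n → ℝ) | p.1 * p.2 i ≤ ∑ j, B i j * p.2 j} := rfl
    rw [e2]
    exact isClosed_le (continuous_fst.mul ((continuous_apply i).comp continuous_snd))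
      (continuous_finset_sum _ fun j _ =>
        continuous_const.mul ((continuous_apply j).comp continuous_snd))
  have hcompact : IsCompact K := by
    refine IsCompact.of_isClosed_subset ((isCompact_Icc (a := (0:ℝ)) (b := T)).prod
      (isCompact_Icc (a := (0 : Fin n → ℝ)) (b := 1))) hclosed ?_
    rintro ⟨t, u⟩ ⟨h1, h2, h3, h4, _⟩
    refine ⟨⟨h1, h2⟩, ?_⟩
    rw [Set.mem_Icc]
    constructor
    · intro i; exact h3 i
    · intro i
      calc u i ≤ ∑ j, u j := Finset.single_le_sum (fun j _ => h3 j) (Finset.mem_univ i)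
        _ = 1 := h4
  -- the uniform vector
  set u0 : Fin n → ℝ := fun _ => (n : ℝ)⁻¹ with hu0
  have hu0pos : ∀ i, 0 < u0 i := fun i => inv_pos.mpr hnR
  have hu0ne : u0 ≠ 0 := by
    intro h
    have := congrFun h ⟨0, hn⟩
    simp only [Pi.zero_apply] at this
    exact (hu0pos ⟨0, hn⟩).ne' this
  have hu0sum : (∑ i, u0 i) = 1 := by
    rw [hu0]
    rw [Finset.sum_const, Finset.card_univ, Fintype.card_fin, nsmul_eq_mul,
      mul_inv_cancel₀ hnR.ne']
  have hKne : K.Nonempty := by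
    refine ⟨(0, u0), le_refl 0, hT0, fun i => (hu0pos i).le, hu0sum, fun i => ?_⟩
    rw [zero_mul]
    exact (HB u0 (fun i => (hu0pos i).le) hu0ne i).le
  obtain ⟨⟨t, u⟩, hmem, hmax⟩ := hcompact.exists_isMaxOn hKne continuous_fst.continuousOn
  obtain ⟨htn, htT, hun, husum, huineq⟩ := hmem
  simp only at htn htT hun husum huineq
  have humem : ∀ p ∈ K, p.1 ≤ t := fun p hp => hmax hp
  -- t is positive
  have htpos : 0 < t := by
    set m0 : ℝ := Finset.univ.inf' Finset.univ_nonempty (fun i => (B *ᵥ u0) i) with hm0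
    have hm0pos : 0 < m0 := by
      rw [hm0, Finset.lt_inf'_iff]
      exact fun i _ => HB u0 (fun i => (hu0pos i).le) hu0ne i
    have hcand : ((n : ℝ) * m0, u0) ∈ K := by
      have hconstraint : ∀ i, (n : ℝ) * m0 * u0 i ≤ (B *ᵥ u0) i := by
        intro i
        rw [hu0]
        have : (n : ℝ) * m0 * (n : ℝ)⁻¹ = m0 := by field_simp
        rw [this]
        exact Finset.inf'_le _ (Finset.mem_univ i)
      refine ⟨mul_nonneg hnR.le hm0pos.le, ?_, fun i => (hu0pos i).le, hu0sum, hconstraint⟩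
      exact BND _ _ (mul_nonneg hnR.le hm0pos.le) (fun i => (hu0pos i).le) hu0sum hconstraint
    have h6 := humem _ hcand
    simp only at h6
    have h7 : 0 < (n : ℝ) * m0 := mul_pos hnR hm0pos
    linarith
  -- maximality forces an eigenvector
  have hune : u ≠ 0 := by
    intro h
    rw [h] at husum
    simp at husum
  have hvpos : ∀ i, 0 < (B *ᵥ u) i := HB u hun hune
  by_cases hd : ∀ i, (B *ᵥ u) i = t * u i
  · refine ⟨t, u, htpos, fun i => ?_, funext fun i => by
      rw [Pi.smul_apply, smul_eq_mul]; exact hd i⟩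
    have := hvpos i
    rw [hd i] at this
    nlinarith
  · exfalso
    push_neg at hd
    obtain ⟨i1, hi1⟩ := hd
    set d : Fin n → ℝ := fun i => (B *ᵥ u) i - t * u i with hdd
    have hd0 : ∀ i, 0 ≤ d i := fun i => by
      rw [hdd]; have := huineq i; simp only; linarith
    have hdne : d ≠ 0 := by
      intro h
      have := congrFun h i1
      simp only [Pi.zero_apply, hdd] at this
      exact hi1 (by linarith)
    have hBd : ∀ i, 0 < (B *ᵥ d) i := HB d hd0 hdne
    have hBv : ∀ i, (B *ᵥ (B *ᵥ u)) i = t * (B *ᵥ u) i + (B *ᵥ d) i := by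
      intro i
      have hveq : B *ᵥ u = t • u + d := funext fun j => by
        simp only [Pi.add_apply, Pi.smul_apply, smul_eq_mul, hdd]; ring
      conv_lhs => rw [hveq]
      rw [Matrix.mulVec_add, Matrix.mulVec_smul]
      simp only [Pi.add_apply, Pi.smul_apply, smul_eq_mul]
    set eps : ℝ := Finset.univ.inf' Finset.univ_nonempty
      (fun i => (B *ᵥ d) i / (B *ᵥ u) i) with heps
    have hepspos : 0 < eps := by
      rw [heps, Finset.lt_inf'_iff]
      exact fun i _ => div_pos (hBd i) (hvpos i)
    have hkey : ∀ i, (t + eps) * (B *ᵥ u) i ≤ (B *ᵥ (B *ᵥ u)) i := by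
      intro i
      have h1 : eps ≤ (B *ᵥ d) i / (B *ᵥ u) i := Finset.inf'_le _ (Finset.mem_univ i)
      have h2 : eps * (B *ᵥ u) i ≤ (B *ᵥ d) i := by
        rw [← div_mul_cancel₀ ((B *ᵥ d) i) (hvpos i).ne']
        exact mul_le_mul_of_nonneg_right h1 (hvpos i).le
      rw [hBv i]
      nlinarith [hvpos i]
    set sig : ℝ := ∑ i, (B *ᵥ u) i with hsig
    have hsigpos : 0 < sig :=
      Finset.sum_pos (fun i _ => hvpos i) Finset.univ_nonempty
    set w : Fin n → ℝ := sig⁻¹ • (B *ᵥ u) with hw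
    have hwap : ∀ i, w i = sig⁻¹ * (B *ᵥ u) i := fun i => rfl
    have hBw : ∀ i, (B *ᵥ w) i = sig⁻¹ * (B *ᵥ (B *ᵥ u)) i := by
      intro i
      rw [hw, Matrix.mulVec_smul]
      rfl
    have hwK : (t + eps, w) ∈ K := by
      have hw0 : ∀ i, 0 ≤ w i := fun i => by
        rw [hwap]; exact mul_nonneg (inv_pos.mpr hsigpos).le (hvpos i).le
      have hwsum : (∑ i, w i) = 1 := by
        simp only [hwap]
        rw [← Finset.mul_sum, ← hsig, inv_mul_cancel₀ hsigpos.ne']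
      have hwineq : ∀ i, (t + eps) * w i ≤ (B *ᵥ w) i := by
        intro i
        rw [hwap, hBw]
        have := hkey i
        have hinv : 0 ≤ sig⁻¹ := (inv_pos.mpr hsigpos).le
        nlinarith
      have hte : 0 ≤ t + eps := by linarith
      exact ⟨hte, BND _ _ hte hw0 hwsum hwineq, hw0, hwsum, hwineq⟩
    have h8 := humem _ hwK
    simp only at h8
    linarith

lemma perron_main {n : ℕ} (hn : 0 < n) (M : Matrix (Fin n) (Fin n) ℝ)
    (hoff : ∀ i j, i ≠ j → 0 ≤ M i j) (hirr : MatIrreducible M) :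
    ∃ r : ℝ, ∃ z : Fin n → ℝ, (∀ i, 0 < z i) ∧ M *ᵥ z = r • z ∧ specBound M = r := by
  haveI : Nonempty (Fin n) := ⟨⟨0, hn⟩⟩
  classical
  set c : ℝ := 1 + ∑ i, |M i i| with hc
  set A : Matrix (Fin n) (Fin n) ℝ := M + c • 1 with hA
  have hAapp : ∀ i j, A i j = M i j + c * (if i = j then 1 else 0) := by
    intro i j
    rw [hA]
    simp [Matrix.add_apply, Matrix.smul_apply, Matrix.one_apply]
  have hAnn : ∀ i j, 0 ≤ A i j := by
    intro i j
    rw [hAapp]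
    by_cases h : i = j
    · subst h
      rw [if_pos rfl, mul_one]
      have h1 : |M i i| ≤ ∑ k, |M k k| :=
        Finset.single_le_sum (f := fun k => |M k k|) (fun k _ => abs_nonneg _)
          (Finset.mem_univ i)
      have h2 : -M i i ≤ |M i i| := neg_le_abs _
      rw [hc]; linarith
    · simp only [if_neg h, mul_zero, add_zero]
      exact hoff i j h
  have hAirr : MatIrreducible A := by
    intro S hS1 hS2
    obtain ⟨i, hi, j, hj, hij⟩ := hirr S hS1 hS2
    have hne : i ≠ j := fun h => hi (h ▸ hj)
    refine ⟨i, hi, j, hj, ?_⟩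
    rw [hAapp, if_neg hne, mul_zero, add_zero]
    exact hij
  set B : Matrix (Fin n) (Fin n) ℝ := (1 + A) ^ (n - 1) with hB
  have HB : ∀ u : Fin n → ℝ, (∀ i, 0 ≤ u i) → u ≠ 0 → ∀ i, 0 < (B *ᵥ u) i := by
    intro u hu hu0 i
    have hcard : 1 ≤ (Finset.univ.filter (fun i => 0 < u i)).card := by
      obtain ⟨j, hj⟩ : ∃ j, u j ≠ 0 := by
        by_contra h; push_neg at h; exact hu0 (funext h)
      exact Finset.card_pos.mpr ⟨j, Finset.mem_filter.mpr ⟨Finset.mem_univ j,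
        (hu j).lt_of_ne' hj⟩⟩
    exact grow_mulVec A hAnn hAirr (n - 1) u hu hu0 (by omega) i
  obtain ⟨t, u, htpos, hupos, hBu⟩ := perron_B hn B HB
  -- A *ᵥ u is also an eigenvector of B
  have hcomm : Commute A B := by
    rw [hB]
    exact ((Commute.one_right A).add_right (Commute.refl A)).pow_right (n - 1)
  have hBAu : B *ᵥ (A *ᵥ u) = t • (A *ᵥ u) := by
    rw [Matrix.mulVec_mulVec, ← hcomm.eq, ← Matrix.mulVec_mulVec, hBu,
      Matrix.mulVec_smul]
  -- simplicity: A *ᵥ u is a multiple of u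
  set v : Fin n → ℝ := A *ᵥ u with hv
  set κ : ℝ := Finset.univ.inf' Finset.univ_nonempty (fun i => v i / u i) with hκ
  obtain ⟨i0, _, hi0⟩ := Finset.exists_mem_eq_inf' (Finset.univ_nonempty) (fun i => v i / u i)
  have hd0 : ∀ i, 0 ≤ v i - κ * u i := by
    intro i
    have h1 : κ ≤ v i / u i := by rw [hκ]; exact Finset.inf'_le _ (Finset.mem_univ i)
    have h2 : κ * u i ≤ v i / u i * u i := mul_le_mul_of_nonneg_right h1 (hupos i).le
    rw [div_mul_cancel₀ _ (hupos i).ne'] at h2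
    linarith
  have hdi0 : v i0 - κ * u i0 = 0 := by
    rw [hκ, hi0, div_mul_cancel₀ _ (hupos i0).ne', sub_self]
  have hdeig : B *ᵥ (fun i => v i - κ * u i) = t • (fun i => v i - κ * u i) := by
    have : (fun i => v i - κ * u i) = v - κ • u := by funext i; simp [Pi.sub_apply]
    rw [this, Matrix.mulVec_sub, Matrix.mulVec_smul, hBAu, hBu]
    funext i
    simp only [Pi.sub_apply, Pi.smul_apply, smul_eq_mul]
    ring
  have hdz : ∀ i, v i - κ * u i = 0 := by
    by_contra h
    push_neg at h
    obtain ⟨i1, hi1⟩ := h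
    have hpos := HB (fun i => v i - κ * u i) hd0 (by
      intro hcon
      exact hi1 (congrFun hcon i1)) i0
    rw [hdeig] at hpos
    simp only [Pi.smul_apply, smul_eq_mul, hdi0, mul_zero] at hpos
    exact lt_irrefl _ hpos
  have hAu : A *ᵥ u = κ • u := by
    funext i
    have := hdz i
    simp only [Pi.smul_apply, smul_eq_mul]
    rw [← hv]
    linarith
  have hMu : M *ᵥ u = (κ - c) • u := by
    have h1 : M = A - c • 1 := by rw [hA]; abel
    rw [h1, Matrix.sub_mulVec, hAu, Matrix.smul_mulVec, Matrix.one_mulVec]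
    funext i
    simp only [Pi.sub_apply, Pi.smul_apply, smul_eq_mul]
    ring
  exact ⟨κ - c, u, hupos, hMu,
    specBound_eq_of_pos_eigenvector hn M hoff u hupos (κ - c) hMu⟩


lemma irr_transpose {n : ℕ} (A : Matrix (Fin n) (Fin n) ℝ) (h : MatIrreducible A) :
    MatIrreducible Aᵀ := by
  intro S hS1 hS2
  classical
  have hc1 : Sᶜ.Nonempty := by
    obtain ⟨x, hx⟩ : ∃ x, x ∉ S := by
      by_contra hcon; push_neg at hcon
      exact hS2 (Finset.eq_univ_iff_forall.mpr hcon)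
    exact ⟨x, Finset.mem_compl.mpr hx⟩
  have hc2 : Sᶜ ≠ Finset.univ := by
    obtain ⟨j, hj⟩ := hS1
    intro hcon
    have := Finset.eq_univ_iff_forall.mp hcon j
    exact Finset.mem_compl.mp this hj
  obtain ⟨i, hi, j, hj, hij⟩ := h Sᶜ hc1 hc2
  refine ⟨j, Finset.mem_compl.mp hj, i, ?_, ?_⟩
  · by_contra hcon
    exact hi (Finset.mem_compl.mpr hcon)
  · rw [Matrix.transpose_apply]
    exact hij

lemma conn_of_irr {n : ℕ} (L : Matrix (Fin n) (Fin n) ℝ) (hirr : MatIrreducible L)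
    (ρ : Fin n → ℝ) (h : ∀ i j, i ≠ j → L i j ≠ 0 → ρ i = ρ j) :
    ∀ i j, ρ i = ρ j := by
  classical
  intro a b
  suffices hsuf : ∀ i, ρ i = ρ a by rw [hsuf b]
  intro i
  set S : Finset (Fin n) := Finset.univ.filter (fun k => ρ k = ρ a) with hS
  have haS : a ∈ S := Finset.mem_filter.mpr ⟨Finset.mem_univ a, rfl⟩
  by_cases hSu : S = Finset.univ
  · exact (Finset.mem_filter.mp (Finset.eq_univ_iff_forall.mp hSu i)).2
  · exfalso
    obtain ⟨i', hi', j', hj', hij'⟩ := hirr S ⟨a, haS⟩ hSu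
    have hne : i' ≠ j' := fun hcon => hi' (hcon ▸ hj')
    have : ρ i' = ρ j' := h i' j' hne hij'
    have : i' ∈ S := Finset.mem_filter.mpr ⟨Finset.mem_univ i',
      this.trans (Finset.mem_filter.mp hj').2⟩
    exact hi' this

lemma key_ineq {n : ℕ} (M : Matrix (Fin n) (Fin n) ℝ)
    (hoff : ∀ i j, i ≠ j → 0 ≤ M i j) (r : ℝ) (y z x : Fin n → ℝ)
    (hy : ∀ i, 0 < y i) (hz : ∀ i, 0 < z i) (hx : ∀ i, 0 < x i)
    (hzr : M *ᵥ z = r • z) (hyr : Mᵀ *ᵥ y = r • y) :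
    r * (∑ i, y i * z i) ≤ ∑ i, y i * z i * ((M *ᵥ x) i / x i) ∧
    ((∑ i, y i * z i * ((M *ᵥ x) i / x i)) = r * (∑ i, y i * z i) →
      ∀ i j, i ≠ j → M i j ≠ 0 → x i * z j = x j * z i) := by
  classical
  set w : Fin n → ℝ := fun i => Real.log (x i / z i) with hw
  have hexp : ∀ i j, z j * Real.exp (w j - w i) = x j * z i / x i := by
    intro i j
    rw [hw]
    simp only
    rw [Real.exp_sub, Real.exp_log (div_pos (hx j) (hz j)),
      Real.exp_log (div_pos (hx i) (hz i))]
    have hne1 := (hz j).ne'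
    have hne2 := (hx i).ne'
    have hne3 := (hz i).ne'
    have hne4 := (hx j).ne'
    field_simp
  have hzrow : ∀ i, (M *ᵥ z) i = r * z i := fun i => by
    rw [hzr]; simp [Pi.smul_apply]
  have hyrow : ∀ j, (∑ i, M i j * y i) = r * y j := fun j => by
    have := congrFun hyr j
    simp only [Matrix.mulVec, dotProduct, Matrix.transpose_apply,
      Pi.smul_apply, smul_eq_mul] at this
    rw [← this]
  set F : Fin n → Fin n → ℝ := fun i j =>
    y i * M i j * z j * (Real.exp (w j - w i) - 1 - (w j - w i)) with hF
  have hFnn : ∀ i j, 0 ≤ F i j := by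
    intro i j
    rw [hF]
    by_cases hij : i = j
    · subst hij
      simp [Real.exp_zero]
    · refine mul_nonneg (mul_nonneg (mul_nonneg (hy i).le (hoff i j hij)) (hz j).le) ?_
      have := Real.add_one_le_exp (w j - w i)
      linarith
  have hS1 : ∑ i, ∑ j, y i * M i j * z j * Real.exp (w j - w i)
      = ∑ i, y i * z i * ((M *ᵥ x) i / x i) := by
    refine Finset.sum_congr rfl fun i _ => ?_
    have hrow : ∀ j, y i * M i j * z j * Real.exp (w j - w i)
        = y i * z i / x i * (M i j * x j) := by
      intro j
      calc y i * M i j * z j * Real.exp (w j - w i)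
          = y i * M i j * (z j * Real.exp (w j - w i)) := by ring
        _ = y i * M i j * (x j * z i / x i) := by rw [hexp i j]
        _ = y i * z i / x i * (M i j * x j) := by ring
    rw [Finset.sum_congr rfl fun j _ => hrow j, ← Finset.mul_sum]
    have : (M *ᵥ x) i = ∑ j, M i j * x j := rfl
    rw [this]
    ring
  have hS2 : ∑ i, ∑ j, y i * M i j * z j = r * ∑ i, y i * z i := by
    rw [Finset.mul_sum]
    refine Finset.sum_congr rfl fun i _ => ?_
    have : ∑ j, y i * M i j * z j = y i * ∑ j, M i j * z j := by
      rw [Finset.mul_sum]; exact Finset.sum_congr rfl fun j _ => by ring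
    rw [this]
    have h2 : (∑ j, M i j * z j) = r * z i := hzrow i
    rw [h2]; ring
  have hS3 : ∑ i, ∑ j, y i * M i j * z j * (w j - w i) = 0 := by
    have hsplit : ∀ i j, y i * M i j * z j * (w j - w i)
        = y i * M i j * z j * w j - y i * M i j * z j * w i := fun i j => by ring
    simp only [hsplit, Finset.sum_sub_distrib]
    have ha : ∑ i, ∑ j, y i * M i j * z j * w j = r * ∑ j, y j * z j * w j := by
      rw [Finset.sum_comm, Finset.mul_sum]
      refine Finset.sum_congr rfl fun j _ => ?_
      have : ∑ i, y i * M i j * z j * w j = z j * w j * ∑ i, M i j * y i := by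
        rw [Finset.mul_sum]; exact Finset.sum_congr rfl fun i _ => by ring
      rw [this, hyrow j]
      ring
    have hb : ∑ i, ∑ j, y i * M i j * z j * w i = r * ∑ i, y i * z i * w i := by
      rw [Finset.mul_sum]
      refine Finset.sum_congr rfl fun i _ => ?_
      have : ∑ j, y i * M i j * z j * w i = y i * w i * ∑ j, M i j * z j := by
        rw [Finset.mul_sum]; exact Finset.sum_congr rfl fun j _ => by ring
      have h2 : (∑ j, M i j * z j) = r * z i := hzrow i
      rw [this, h2]
      ring
    rw [ha, hb]
    have : ∑ j, y j * z j * w j = ∑ i, y i * z i * w i := rfl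
    rw [this, sub_self]
  have hIDN : ∑ i, ∑ j, F i j
      = (∑ i, y i * z i * ((M *ᵥ x) i / x i)) - r * (∑ i, y i * z i) := by
    have hterm : ∀ i j, F i j = y i * M i j * z j * Real.exp (w j - w i)
        - y i * M i j * z j - y i * M i j * z j * (w j - w i) := by
      intro i j; rw [hF]; ring
    simp only [hterm, Finset.sum_sub_distrib]
    rw [hS1, hS2, hS3]
    ring
  have hFnn2 : 0 ≤ ∑ i, ∑ j, F i j :=
    Finset.sum_nonneg fun i _ => Finset.sum_nonneg fun j _ => hFnn i j
  constructor
  · linarith [hIDN ▸ hFnn2]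
  · intro heq i j hij hMij
    have hzero : ∑ i, ∑ j, F i j = 0 := by rw [hIDN, heq]; ring
    have hinner : ∀ i ∈ Finset.univ, (0:ℝ) = ∑ j, F i j → True := fun _ _ _ => trivial
    have hall : ∀ i' ∈ (Finset.univ : Finset (Fin n)), ∑ j, F i' j = 0 := by
      have := (Finset.sum_eq_zero_iff_of_nonneg
        (fun i _ => Finset.sum_nonneg fun j _ => hFnn i j)).mp hzero
      exact this
    have hFij : F i j = 0 := by
      have := (Finset.sum_eq_zero_iff_of_nonneg (fun j _ => hFnn i j)).mp
        (hall i (Finset.mem_univ i)) j (Finset.mem_univ j)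
      exact this
    have hwij : w j = w i := by
      by_contra hcon
      have h1 : 0 < y i * M i j * z j :=
        mul_pos (mul_pos (hy i) ((hoff i j hij).lt_of_ne' hMij)) (hz j)
      have h2 : 0 < Real.exp (w j - w i) - 1 - (w j - w i) := by
        have := Real.add_one_lt_exp (x := w j - w i) (by
          intro hc; exact hcon (by linarith [sub_eq_zero.mp hc]))
        linarith
      have : 0 < F i j := by rw [hF]; exact mul_pos h1 h2
      linarith
    have hdiv : x j / z j = x i / z i := by
      have e1 : x j / z j = Real.exp (w j) := (Real.exp_log (div_pos (hx j) (hz j))).symm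
      have e2 : x i / z i = Real.exp (w i) := (Real.exp_log (div_pos (hx i) (hz i))).symm
      rw [e1, e2, hwij]
    have := (div_eq_div_iff (hz j).ne' (hz i).ne').mp hdiv
    linarith [this]

set_option maxHeartbeats 1000000 in
lemma main_ineq {n : ℕ} (hn : 0 < n) (L : Matrix (Fin n) (Fin n) ℝ)
    (hL_off : ∀ i j, i ≠ j → L i j ≤ 0) (hL_irr : MatIrreducible L) (q : Fin n → ℝ)
    (μ1 μ2 a b : ℝ) (h1 : 0 < μ1) (h2 : 0 < μ2) (ha : 0 < a) (hb : 0 < b)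
    (hab : a + b = 1) :
    specBound (Matrix.diagonal q - (a * μ1 + b * μ2) • L) ≤
      a * specBound (Matrix.diagonal q - μ1 • L) +
      b * specBound (Matrix.diagonal q - μ2 • L) ∧
    (μ1 ≠ μ2 →
      specBound (Matrix.diagonal q - (a * μ1 + b * μ2) • L) =
        a * specBound (Matrix.diagonal q - μ1 • L) +
        b * specBound (Matrix.diagonal q - μ2 • L) →
      ∀ i j, q i = q j) := by
  classical
  set μm : ℝ := a * μ1 + b * μ2 with hμm
  have hμmpos : 0 < μm := by positivity
  set M : ℝ → Matrix (Fin n) (Fin n) ℝ := fun μ => Matrix.diagonal q - μ • L with hM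
  have hMapp : ∀ (μ : ℝ) i j, i ≠ j → M μ i j = -(μ * L i j) := by
    intro μ i j hij
    rw [hM]
    simp only [Matrix.sub_apply, Matrix.smul_apply, smul_eq_mul,
      Matrix.diagonal_apply_ne _ hij]
    ring
  have hMoff : ∀ (μ : ℝ), 0 < μ → ∀ i j, i ≠ j → 0 ≤ M μ i j := by
    intro μ hμ i j hij
    rw [hMapp μ i j hij]
    have := hL_off i j hij
    nlinarith
  have hMirr : ∀ (μ : ℝ), 0 < μ → MatIrreducible (M μ) := by
    intro μ hμ S hS1 hS2
    obtain ⟨i, hi, j, hj, hij⟩ := hL_irr S hS1 hS2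
    have hne : i ≠ j := fun h => hi (h ▸ hj)
    refine ⟨i, hi, j, hj, ?_⟩
    rw [hMapp μ i j hne]
    intro hcon
    rw [neg_eq_zero, mul_eq_zero] at hcon
    rcases hcon with h | h
    · exact hμ.ne' h
    · exact hij h
  have hMxi : ∀ (μ : ℝ) (x : Fin n → ℝ) (i : Fin n),
      (M μ *ᵥ x) i = q i * x i - μ * (L *ᵥ x) i := by
    intro μ x i
    rw [hM]
    simp only [Matrix.sub_mulVec, Matrix.smul_mulVec, Pi.sub_apply,
      Pi.smul_apply, smul_eq_mul, Matrix.mulVec_diagonal]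
  obtain ⟨s1, z1, hz1pos, hz1eig, hs1⟩ := perron_main hn (M μ1) (hMoff μ1 h1) (hMirr μ1 h1)
  obtain ⟨s2, z2, hz2pos, hz2eig, hs2⟩ := perron_main hn (M μ2) (hMoff μ2 h2) (hMirr μ2 h2)
  obtain ⟨sm, zm, hzmpos, hzmeig, hsm⟩ :=
    perron_main hn (M μm) (hMoff μm hμmpos) (hMirr μm hμmpos)
  have hMToff : ∀ i j, i ≠ j → 0 ≤ (M μm)ᵀ i j := fun i j hij =>
    hMoff μm hμmpos j i hij.symm
  obtain ⟨r', y, hypos, hyeig, _⟩ :=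
    perron_main hn (M μm)ᵀ hMToff (irr_transpose _ (hMirr μm hμmpos))
  set c : ℝ := ∑ i, y i * z1 i with hcc -- dummy to please linter
  clear hcc
  clear c
  have hc : (0:ℝ) < ∑ i, y i * zm i :=
    Finset.sum_pos (fun i _ => mul_pos (hypos i) (hzmpos i)) ⟨⟨0, hn⟩, Finset.mem_univ _⟩
  -- pairing: r' = sm
  have hr' : r' = sm := by
    have e1 : ∑ j, ((M μm)ᵀ *ᵥ y) j * zm j = r' * ∑ j, y j * zm j := by
      rw [hyeig, Finset.mul_sum]
      exact Finset.sum_congr rfl fun j _ => by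
        simp only [Pi.smul_apply, smul_eq_mul]; ring
    have e2 : ∑ j, ((M μm)ᵀ *ᵥ y) j * zm j = sm * ∑ j, y j * zm j := by
      have hlhs : ∑ j, ((M μm)ᵀ *ᵥ y) j * zm j
          = ∑ j, ∑ i, (M μm) i j * y i * zm j := by
        refine Finset.sum_congr rfl fun j _ => ?_
        have : ((M μm)ᵀ *ᵥ y) j = ∑ i, (M μm) i j * y i := by
          simp only [Matrix.mulVec, dotProduct, Matrix.transpose_apply]
        rw [this, Finset.sum_mul]
      rw [hlhs, Finset.sum_comm, Finset.mul_sum]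
      refine Finset.sum_congr rfl fun i _ => ?_
      have : ∑ j, (M μm) i j * y i * zm j = y i * ∑ j, (M μm) i j * zm j := by
        rw [Finset.mul_sum]; exact Finset.sum_congr rfl fun j _ => by ring
      rw [this]
      have h3 : (∑ j, (M μm) i j * zm j) = sm * zm i := by
        have := congrFun hzmeig i
        simp only [Pi.smul_apply, smul_eq_mul] at this
        exact this
      rw [h3]; ring
    have := e1.symm.trans e2
    exact mul_right_cancel₀ hc.ne' this
  rw [hr'] at hyeig
  -- key inequalities
  have K1 := key_ineq (M μm) (hMoff μm hμmpos) sm y zm z1 hypos hzmpos hz1pos hzmeig hyeig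
  have K2 := key_ineq (M μm) (hMoff μm hμmpos) sm y zm z2 hypos hzmpos hz2pos hzmeig hyeig
  -- Rayleigh decomposition
  set Qc : ℝ := ∑ i, y i * zm i * q i with hQc
  set G1 : ℝ := ∑ i, y i * zm i * ((L *ᵥ z1) i / z1 i) with hG1
  set G2 : ℝ := ∑ i, y i * zm i * ((L *ᵥ z2) i / z2 i) with hG2
  have hray : ∀ (μ : ℝ) (x : Fin n → ℝ) (hx : ∀ i, 0 < x i),
      ∑ i, y i * zm i * ((M μ *ᵥ x) i / x i)
        = (∑ i, y i * zm i * q i) - μ * (∑ i, y i * zm i * ((L *ᵥ x) i / x i)) := by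
    intro μ x hx
    have hterm : ∀ i, y i * zm i * ((M μ *ᵥ x) i / x i)
        = y i * zm i * q i - μ * (y i * zm i * ((L *ᵥ x) i / x i)) := by
      intro i
      rw [hMxi μ x i]
      have hxi := (hx i).ne'
      field_simp
    rw [Finset.sum_congr rfl fun i _ => hterm i, Finset.sum_sub_distrib, ← Finset.mul_sum]
  have heigray : ∀ (μ : ℝ) (s : ℝ) (x : Fin n → ℝ) (hx : ∀ i, 0 < x i),
      M μ *ᵥ x = s • x →
      ∑ i, y i * zm i * ((M μ *ᵥ x) i / x i) = s * ∑ i, y i * zm i := by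
    intro μ s x hx heig
    rw [Finset.mul_sum]
    refine Finset.sum_congr rfl fun i _ => ?_
    have : (M μ *ᵥ x) i = s * x i := by
      have := congrFun heig i
      simpa [Pi.smul_apply] using this
    rw [this]
    have hxi := (hx i).ne'
    field_simp
  set cY : ℝ := ∑ i, y i * zm i with hcY
  have hk1 : Qc - μ1 * G1 = s1 * cY := by
    have := (hray μ1 z1 hz1pos).symm.trans (heigray μ1 s1 z1 hz1pos hz1eig)
    rw [hQc, hG1, hcY]
    exact this
  have hk2 : Qc - μ2 * G2 = s2 * cY := by
    have := (hray μ2 z2 hz2pos).symm.trans (heigray μ2 s2 z2 hz2pos hz2eig)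
    rw [hQc, hG2, hcY]
    exact this
  have hK1' : sm * cY ≤ Qc - μm * G1 := by
    have := K1.1
    rw [hray μm z1 hz1pos] at this
    exact this
  have hK2' : sm * cY ≤ Qc - μm * G2 := by
    have := K2.1
    rw [hray μm z2 hz2pos] at this
    exact this
  set m : ℝ := (Qc - sm * cY) / μm with hmdef
  have hG1m : G1 ≤ m := by
    rw [hmdef, le_div_iff₀ hμmpos]
    linarith
  have hG2m : G2 ≤ m := by
    rw [hmdef, le_div_iff₀ hμmpos]
    linarith
  have hmval : μm * m = Qc - sm * cY := by
    rw [hmdef, mul_div_assoc', mul_div_cancel_left₀ _ hμmpos.ne']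
  have e3 : a * (s1 * cY) + b * (s2 * cY) = Qc - (a * μ1 * G1 + b * μ2 * G2) := by
    linear_combination (-a) * hk1 - b * hk2 + Qc * hab
  have hineq_core : sm * cY ≤ a * (s1 * cY) + b * (s2 * cY) := by
    have hA1 : a * μ1 * G1 ≤ a * μ1 * m :=
      mul_le_mul_of_nonneg_left hG1m (by positivity)
    have hA2 : a * μ2 * G2 ≤ a * μ2 * m := mul_le_mul_of_nonneg_left hG2m (by positivity)
    have hB2 : b * μ2 * G2 ≤ b * μ2 * m :=
      mul_le_mul_of_nonneg_left hG2m (by positivity)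
    have hsum : a * μ1 * m + b * μ2 * m = Qc - sm * cY := by
      have : a * μ1 * m + b * μ2 * m = μm * m := by rw [hμm]; ring
      rw [this, hmval]
    rw [e3]
    linarith
  have hgoal1 : sm ≤ a * s1 + b * s2 := by
    have : sm * cY ≤ (a * s1 + b * s2) * cY := by
      have : (a * s1 + b * s2) * cY = a * (s1 * cY) + b * (s2 * cY) := by ring
      rw [this]
      exact hineq_core
    exact le_of_mul_le_mul_right (by linarith [this]) hc
  have hs1' : specBound (Matrix.diagonal q - μ1 • L) = s1 := hs1
  have hs2' : specBound (Matrix.diagonal q - μ2 • L) = s2 := hs2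
  have hsm' : specBound (Matrix.diagonal q - (a * μ1 + b * μ2) • L) = sm := hsm
  constructor
  · rw [hs1', hs2', hsm']
    exact hgoal1
  · intro hμne heqs
    rw [hs1', hs2', hsm'] at heqs
    -- equality forces G1 = m
    have heqc : sm * cY = a * (s1 * cY) + b * (s2 * cY) := by
      rw [heqs]; ring
    have hfact : a * μ1 * (m - G1) + b * μ2 * (m - G2) = 0 := by
      have hsum : a * μ1 * m + b * μ2 * m = Qc - sm * cY := by
        have : a * μ1 * m + b * μ2 * m = μm * m := by rw [hμm]; ring
        rw [this, hmval]
      rw [e3] at heqc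
      linarith [hsum, heqc]
    have hG1eq : G1 = m := by
      have h01 : 0 ≤ m - G1 := by linarith
      have h02 : 0 ≤ m - G2 := by linarith
      have hp1 : 0 < a * μ1 := by positivity
      have hp2 : 0 < b * μ2 := by positivity
      have hz1' : a * μ1 * (m - G1) = 0 := by
        linarith [hfact, mul_nonneg hp1.le h01, mul_nonneg hp2.le h02]
      rcases mul_eq_zero.mp hz1' with h | h
      · exact absurd h hp1.ne'
      · linarith
    -- equality in the key inequality at x = z1
    have heqkey : ∑ i, y i * zm i * ((M μm *ᵥ z1) i / z1 i) = sm * ∑ i, y i * zm i := by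
      rw [hray μm z1 hz1pos, ← hQc, ← hG1, ← hcY, hG1eq, hmval]
      ring
    have hcond := K1.2 heqkey
    -- ratios are constant
    have hρ : ∀ i j, z1 i / zm i = z1 j / zm j := by
      apply conn_of_irr L hL_irr
      intro i j hij hLij
      have hMij : M μm i j ≠ 0 := by
        rw [hMapp μm i j hij]
        intro hcon
        rw [neg_eq_zero, mul_eq_zero] at hcon
        rcases hcon with h | h
        · exact hμmpos.ne' h
        · exact hLij h
      have := hcond i j hij hMij
      rw [div_eq_div_iff (hzmpos i).ne' (hzmpos j).ne']
      linarith [this]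
    set κ : ℝ := z1 ⟨0, hn⟩ / zm ⟨0, hn⟩ with hκdef
    have hκpos : 0 < κ := div_pos (hz1pos _) (hzmpos _)
    have hz1f : z1 = κ • zm := by
      funext i
      have := hρ i ⟨0, hn⟩
      rw [div_eq_div_iff (hzmpos i).ne' (hzmpos _).ne'] at this
      simp only [Pi.smul_apply, smul_eq_mul, hκdef]
      have h0 := (hzmpos ⟨0, hn⟩).ne'
      field_simp
      linear_combination this
    -- zm is an eigenvector of M μ1 as well
    have hzmeig1 : M μ1 *ᵥ zm = s1 • zm := by
      have h5 : M μ1 *ᵥ (κ • zm) = s1 • (κ • zm) := by rw [← hz1f]; exact hz1eig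
      rw [Matrix.mulVec_smul] at h5
      have h6 : κ • (M μ1 *ᵥ zm) = κ • (s1 • zm) := by
        rw [h5, smul_comm]
      exact smul_right_injective (Fin n → ℝ) hκpos.ne' h6
    -- L *ᵥ zm is proportional to zm
    set κ2 : ℝ := (s1 - sm) / (μm - μ1) with hκ2def
    have hμdiff : μm - μ1 ≠ 0 := by
      rw [hμm]
      intro hcon
      apply hμne
      have : b * (μ2 - μ1) = 0 := by linear_combination hcon - μ1 * hab
      rcases mul_eq_zero.mp this with h | h
      · exact absurd h hb.ne'
      · linarith
    have hLzm : ∀ i, (L *ᵥ zm) i = κ2 * zm i := by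
      intro i
      have e5 : q i * zm i - μ1 * (L *ᵥ zm) i = s1 * zm i := by
        have := congrFun hzmeig1 i
        rw [hMxi μ1 zm i] at this
        simpa [Pi.smul_apply] using this
      have e6 : q i * zm i - μm * (L *ᵥ zm) i = sm * zm i := by
        have := congrFun hzmeig i
        rw [hMxi μm zm i] at this
        simpa [Pi.smul_apply] using this
      have e7 : (μm - μ1) * (L *ᵥ zm) i = (s1 - sm) * zm i := by linarith
      rw [hκ2def]
      field_simp
      linear_combination e7
    -- q must be constant
    have hqconst : ∀ i, q i = sm + μm * κ2 := by
      intro i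
      have e6 : q i * zm i - μm * (κ2 * zm i) = sm * zm i := by
        have := congrFun hzmeig i
        rw [hMxi μm zm i, hLzm i] at this
        simpa [Pi.smul_apply] using this
      have e8 : (q i - (sm + μm * κ2)) * zm i = 0 := by linarith
      rcases mul_eq_zero.mp e8 with h | h
      · linarith
      · exact absurd h (hzmpos i).ne'
    intro i j
    rw [hqconst i, hqconst j]

/-- For an irreducible strictly sub-Laplacian matrix `L` and `Q = diagonal q`, the map
`μ ↦ s(Q - μL)` is convex on `(0,∞)`, and strictly convex there if and only if the `q i`
are not all equal. -/
theorem stmt5 {n : ℕ} (L : Matrix (Fin n) (Fin n) ℝ)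
    (hL_off : ∀ i j, i ≠ j → L i j ≤ 0)
    (hL_diag : ∀ j, -∑ i ∈ Finset.univ.erase j, L i j ≤ L j j)
    (hL_strict : ∃ j, -∑ i ∈ Finset.univ.erase j, L i j < L j j)
    (hL_irr : MatIrreducible L)
    (q : Fin n → ℝ) :
    ConvexOn ℝ (Set.Ioi 0)
      (fun μ : ℝ => specBound (Matrix.diagonal q - μ • L)) ∧
    (StrictConvexOn ℝ (Set.Ioi 0)
        (fun μ : ℝ => specBound (Matrix.diagonal q - μ • L)) ↔
      ¬ ∀ i j, q i = q j) := by
  obtain ⟨j0, -⟩ := hL_strict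
  have hn : 0 < n := j0.pos
  constructor
  · refine ⟨convex_Ioi 0, ?_⟩
    intro x hx y hy a b ha hb hab
    rcases eq_or_lt_of_le ha with rfl | ha'
    · have hb1 : b = 1 := by linarith
      subst hb1
      simp
    · rcases eq_or_lt_of_le hb with rfl | hb'
      · have ha1 : a = 1 := by linarith
        subst ha1
        simp
      · have h := main_ineq hn L hL_off hL_irr q x y a b
          (Set.mem_Ioi.mp hx) (Set.mem_Ioi.mp hy) ha' hb' hab
        simpa [smul_eq_mul] using h.1
  · constructor
    · intro hstrict hq
      -- q is constant, so the function is affine; contradiction with strict convexity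
      have hnegoff : ∀ i j, i ≠ j → 0 ≤ (-L) i j := by
        intro i j hij
        simp only [Matrix.neg_apply]
        linarith [hL_off i j hij]
      have hnegirr : MatIrreducible (-L) := by
        intro S hS1 hS2
        obtain ⟨i, hi, j, hj, hij⟩ := hL_irr S hS1 hS2
        exact ⟨i, hi, j, hj, by simp only [Matrix.neg_apply, neg_ne_zero]; exact hij⟩
      obtain ⟨r0, z0, hz0pos, hz0eig, -⟩ := perron_main hn (-L) hnegoff hnegirr
      have hLz0 : ∀ i, (L *ᵥ z0) i = -(r0 * z0 i) := by
        intro i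
        have := congrFun hz0eig i
        rw [Matrix.neg_mulVec] at this
        simp only [Pi.neg_apply, Pi.smul_apply, smul_eq_mul] at this
        linarith
      have hflin : ∀ μ : ℝ, 0 < μ →
          specBound (Matrix.diagonal q - μ • L) = q j0 + μ * r0 := by
        intro μ hμ
        refine specBound_eq_of_pos_eigenvector hn _ ?_ z0 hz0pos _ ?_
        · intro i j hij
          rw [Matrix.sub_apply, Matrix.smul_apply, Matrix.diagonal_apply_ne _ hij,
            smul_eq_mul]
          have := hL_off i j hij
          nlinarith
        · funext i
          rw [Matrix.sub_mulVec, Matrix.smul_mulVec]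
          simp only [Pi.sub_apply, Pi.smul_apply, smul_eq_mul, Matrix.mulVec_diagonal]
          rw [hLz0 i, hq i j0]
          ring
      have h1 : ((1:ℝ)/2) • (1:ℝ) + ((1:ℝ)/2) • (2:ℝ) = (3:ℝ)/2 := by norm_num
      have hmem1 : (1:ℝ) ∈ Set.Ioi (0:ℝ) := by norm_num
      have hmem2 : (2:ℝ) ∈ Set.Ioi (0:ℝ) := by norm_num
      have hlt := hstrict.2 hmem1 hmem2 (by norm_num) one_half_pos one_half_pos
        (by norm_num)
      rw [h1] at hlt
      simp only [smul_eq_mul] at hlt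
      rw [hflin 1 (by norm_num), hflin 2 (by norm_num), hflin (3/2) (by norm_num)] at hlt
      linarith
    · intro hq
      refine ⟨convex_Ioi 0, ?_⟩
      intro x hx y hy hxy a b ha hb hab
      have h := main_ineq hn L hL_off hL_irr q x y a b
        (Set.mem_Ioi.mp hx) (Set.mem_Ioi.mp hy) ha hb hab
      have hle : (fun μ : ℝ => specBound (Matrix.diagonal q - μ • L)) (a • x + b • y) ≤
          a • specBound (Matrix.diagonal q - x • L) + b • specBound (Matrix.diagonal q - y • L) := by
        simpa [smul_eq_mul] using h.1
      refine lt_of_le_of_ne hle ?_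
      intro heq
      apply hq
      apply h.2 hxy
      simpa [smul_eq_mul] using heq
end

section
/- Let A be a quasi-positive n×n real matrix (not necessarily irreducible) with s(A) ≤ 0, and let Q = diag(q_1, …, q_n) be a real diagonal matrix. Then the function μ ↦ s(μA + Q) is nonincreasing and convex on (0, ∞). -/
open Matrix Filter
open scoped Pointwise

namespace SB8

set_option synthInstance.maxHeartbeats 400000
set_option maxHeartbeats 1000000
set_option linter.unusedTactic false
set_option linter.unreachableTactic false

attribute [local instance] Matrix.linftyOpNormedRing Matrix.linftyOpNormedAlgebra

variable {n : ℕ}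

lemma specBound_of_isEmpty [IsEmpty (Fin n)] (M : Matrix (Fin n) (Fin n) ℝ) :
    specBound M = 0 := by
  have : spectrum ℂ (M.map Complex.ofReal) = ∅ := by
    ext z
    simp [spectrum.mem_iff, isUnit_of_subsingleton]
  simp [specBound, this, Real.sSup_empty]

lemma map_smul_one_sub (M : Matrix (Fin n) (Fin n) ℝ) (l : ℝ) :
    (l • (1 : Matrix (Fin n) (Fin n) ℝ) - M).map Complex.ofReal
      = (l : ℂ) • (1 : Matrix (Fin n) (Fin n) ℂ) - M.map Complex.ofReal := by
  ext i j
  by_cases h : i = j <;>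
    simp [Matrix.map_apply, Matrix.one_apply, h, Matrix.sub_apply, Matrix.smul_apply]

lemma mem_spectrum_iff (M : Matrix (Fin n) (Fin n) ℝ) (z : ℂ) :
    z ∈ spectrum ℂ (M.map Complex.ofReal)
      ↔ ¬ IsUnit (z • (1 : Matrix (Fin n) (Fin n) ℂ) - M.map Complex.ofReal) := by
  rw [spectrum.mem_iff, Algebra.algebraMap_eq_smul_one]

lemma re_le_specBound [Nonempty (Fin n)] (M : Matrix (Fin n) (Fin n) ℝ) {z : ℂ}
    (hz : z ∈ spectrum ℂ (M.map Complex.ofReal)) : z.re ≤ specBound M := by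
  haveI : CompleteSpace (Matrix (Fin n) (Fin n) ℂ) := FiniteDimensional.complete ℂ _
  refine le_csSup ⟨‖M.map Complex.ofReal‖, ?_⟩ ⟨z, hz, rfl⟩
  rintro y ⟨w, hw, rfl⟩
  exact (Complex.re_le_norm w).trans (spectrum.norm_le_norm_of_mem hw)

lemma specBound_le [Nonempty (Fin n)] (M : Matrix (Fin n) (Fin n) ℝ) {c : ℝ}
    (h : ∀ z ∈ spectrum ℂ (M.map Complex.ofReal), z.re ≤ c) : specBound M ≤ c := by
  haveI : CompleteSpace (Matrix (Fin n) (Fin n) ℂ) := FiniteDimensional.complete ℂ _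
  obtain ⟨z, hz⟩ := spectrum.nonempty (M.map Complex.ofReal)
  exact csSup_le ⟨z.re, z, hz, rfl⟩ (by rintro y ⟨w, hw, rfl⟩; exact h w hw)

lemma isUnit_of_specBound_lt [Nonempty (Fin n)] (M : Matrix (Fin n) (Fin n) ℝ) {l : ℝ}
    (hl : specBound M < l) : IsUnit (l • (1 : Matrix (Fin n) (Fin n) ℝ) - M) := by
  by_contra hu
  have hdet : (l • (1 : Matrix (Fin n) (Fin n) ℝ) - M).det = 0 := by
    by_contra hd
    exact hu ((Matrix.isUnit_iff_isUnit_det _).2 (isUnit_iff_ne_zero.2 hd))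
  have : ((l : ℂ) • (1 : Matrix (Fin n) (Fin n) ℂ) - M.map Complex.ofReal).det = 0 := by
    have hd2 := RingHom.map_det Complex.ofRealHom (l • (1 : Matrix (Fin n) (Fin n) ℝ) - M)
    rw [RingHom.mapMatrix_apply] at hd2
    rw [← map_smul_one_sub]
    show ((l • (1 : Matrix (Fin n) (Fin n) ℝ) - M).map Complex.ofRealHom).det = 0
    rw [← hd2, hdet]
    simp
  have hmem : (l : ℂ) ∈ spectrum ℂ (M.map Complex.ofReal) := by
    rw [mem_spectrum_iff]
    intro hu'
    exact (isUnit_iff_ne_zero.1 ((Matrix.isUnit_iff_isUnit_det _).1 hu')) this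
  have := re_le_specBound M hmem
  simp only [Complex.ofReal_re] at this
  linarith

lemma specBound_smul (M : Matrix (Fin n) (Fin n) ℝ) {c : ℝ} (hc : 0 < c) :
    specBound (c • M) = c * specBound M := by
  rcases isEmpty_or_nonempty (Fin n) with hE | hE
  · rw [specBound_of_isEmpty, specBound_of_isEmpty, mul_zero]
  haveI : CompleteSpace (Matrix (Fin n) (Fin n) ℂ) := FiniteDimensional.complete ℂ _
  have hmap : (c • M).map Complex.ofReal = (c : ℂ) • M.map Complex.ofReal := by
    ext i j; simp [Matrix.map_apply]
  have hsp : spectrum ℂ ((c • M).map Complex.ofReal)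
      = (c : ℂ) • spectrum ℂ (M.map Complex.ofReal) := by
    rw [hmap]
    exact spectrum.smul_eq_smul (c : ℂ) _ (spectrum.nonempty _)
  have him : Complex.re '' ((c : ℂ) • spectrum ℂ (M.map Complex.ofReal))
      = (fun y => c * y) '' (Complex.re '' spectrum ℂ (M.map Complex.ofReal)) := by
    rw [Set.image_image, ← Set.image_smul, Set.image_image]
    refine Set.image_congr fun z _ => ?_
    simp [Complex.smul_re]
  have hne : (Complex.re '' spectrum ℂ (M.map Complex.ofReal)).Nonempty :=
    (spectrum.nonempty _).image _
  have hbdd : BddAbove (Complex.re '' spectrum ℂ (M.map Complex.ofReal)) := by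
    refine ⟨‖M.map Complex.ofReal‖, ?_⟩
    rintro y ⟨w, hw, rfl⟩
    exact (Complex.re_le_norm w).trans (spectrum.norm_le_norm_of_mem hw)
  rw [specBound, hsp, him]
  have := ((OrderIso.mulLeft₀ c hc).map_csSup' hne hbdd).symm
  exact this

noncomputable instance : CompleteSpace (Matrix (Fin n) (Fin n) ℝ) :=
  FiniteDimensional.complete ℝ _

noncomputable def entryCLM (i j : Fin n) : Matrix (Fin n) (Fin n) ℝ →L[ℝ] ℝ :=
  LinearMap.toContinuousLinearMap
    { toFun := fun T => T i j, map_add' := by intros; rfl, map_smul' := by intros; rfl }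

@[simp] lemma entryCLM_apply (i j : Fin n) (T : Matrix (Fin n) (Fin n) ℝ) :
    entryCLM i j T = T i j := rfl

lemma mul_entry_nonneg {X Y : Matrix (Fin n) (Fin n) ℝ} (hX : ∀ i j, 0 ≤ X i j)
    (hY : ∀ i j, 0 ≤ Y i j) : ∀ i j, 0 ≤ (X * Y) i j := by
  intro i j
  rw [Matrix.mul_apply]
  exact Finset.sum_nonneg fun k _ => mul_nonneg (hX i k) (hY k j)

lemma pow_entry_nonneg {X : Matrix (Fin n) (Fin n) ℝ} (hX : ∀ i j, 0 ≤ X i j) (k : ℕ) :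
    ∀ i j, 0 ≤ (X ^ k) i j := by
  induction k with
  | zero => intro i j; rw [pow_zero]; by_cases h : i = j <;> simp [Matrix.one_apply, h]
  | succ k ih =>
    rw [pow_succ]
    exact mul_entry_nonneg ih hX

lemma ring_inverse_eq {R : Type*} [Ring R] (a b : R) (h1 : a * b = 1) (h2 : b * a = 1) :
    Ring.inverse a = b := by
  have : Ring.inverse ((⟨a, b, h1, h2⟩ : Rˣ) : R) = ((⟨a, b, h1, h2⟩ : Rˣ)⁻¹ : Rˣ) :=
    Ring.inverse_unit _
  simpa using this

lemma inverse_one_sub_nonneg [Nonempty (Fin n)] (T : Matrix (Fin n) (Fin n) ℝ)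
    (hT : ∀ i j, 0 ≤ T i j) (h : ‖T‖ < 1) :
    ∀ i j, 0 ≤ Ring.inverse (1 - T) i j := by
  intro i j
  have hs : HasSum (fun k => T ^ k) (Ring.inverse (1 - T)) := hasSum_geom_series_inverse T h
  have hs2 : HasSum (fun k => (T ^ k) i j) (Ring.inverse (1 - T) i j) := by
    have := (entryCLM i j).hasSum hs
    simpa using this
  exact hasSum_le (fun k => pow_entry_nonneg hT k i j) hasSum_zero hs2

lemma resolvent_nonneg [Nonempty (Fin n)] (M : Matrix (Fin n) (Fin n) ℝ)
    (hq : ∀ i j, i ≠ j → 0 ≤ M i j) {l : ℝ} (hl : specBound M < l) :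
    ∀ i j, 0 ≤ Ring.inverse (l • (1 : Matrix (Fin n) (Fin n) ℝ) - M) i j := by
  classical
  set c : ℝ := ∑ i, ∑ j, |M i j| + 1 with hc
  have hcM : ∀ i, - M i i ≤ c := by
    intro i
    have h1 : |M i i| ≤ ∑ j, |M i j| := Finset.single_le_sum
      (f := fun j => |M i j|) (fun j _ => abs_nonneg _) (Finset.mem_univ i)
    have h2 : ∑ j, |M i j| ≤ ∑ i, ∑ j, |M i j| := Finset.single_le_sum
      (f := fun i => ∑ j, |M i j|)
      (fun i _ => Finset.sum_nonneg fun j _ => abs_nonneg _) (Finset.mem_univ i)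
    have := neg_abs_le (M i i)
    simp only [hc]
    linarith
  set N : Matrix (Fin n) (Fin n) ℝ := M + c • 1 with hN
  have hNnn : ∀ i j, 0 ≤ N i j := by
    intro i j
    by_cases h : i = j
    · subst h
      have := hcM i
      simp only [hN, Matrix.add_apply, Matrix.smul_apply, Matrix.one_apply_eq, smul_eq_mul,
        mul_one]
      linarith
    · have := hq i j h
      simp only [hN, Matrix.add_apply, Matrix.smul_apply, Matrix.one_apply_ne h, smul_eq_mul,
        mul_zero]
      linarith
  -- big-λ case
  have hbig : ∀ μ : ℝ, ‖N‖ < μ + c →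
      (μ • (1 : Matrix (Fin n) (Fin n) ℝ) - M) *
        ((μ + c)⁻¹ • Ring.inverse (1 - (μ + c)⁻¹ • N)) = 1 ∧
      ((μ + c)⁻¹ • Ring.inverse (1 - (μ + c)⁻¹ • N)) *
        (μ • (1 : Matrix (Fin n) (Fin n) ℝ) - M) = 1 ∧
      (∀ i j, 0 ≤ ((μ + c)⁻¹ • Ring.inverse (1 - (μ + c)⁻¹ • N)) i j) := by
    intro μ hμ
    have hpos : 0 < μ + c := lt_of_le_of_lt (norm_nonneg N) hμ
    have hT : ∀ i j, 0 ≤ ((μ + c)⁻¹ • N) i j := fun i j =>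
      mul_nonneg (inv_nonneg.2 hpos.le) (hNnn i j)
    have hTn : ‖(μ + c)⁻¹ • N‖ < 1 := by
      rw [norm_smul, Real.norm_eq_abs, abs_of_pos (inv_pos.2 hpos)]
      rw [inv_mul_lt_iff₀ hpos, mul_one]
      exact hμ
    have hkey : μ • (1 : Matrix (Fin n) (Fin n) ℝ) - M
        = (μ + c) • (1 - (μ + c)⁻¹ • N) := by
      rw [smul_sub, smul_smul, mul_inv_cancel₀ hpos.ne', one_smul, hN]
      ext i j
      by_cases h : i = j <;>
        simp [Matrix.one_apply, h, Matrix.sub_apply, Matrix.smul_apply, Matrix.add_apply] <;>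
        ring
    refine ⟨?_, ?_, ?_⟩
    · rw [hkey, smul_mul_smul_comm, mul_inv_cancel₀ hpos.ne', one_smul,
        Ring.mul_inverse_cancel _ (isUnit_one_sub_of_norm_lt_one hTn)]
    · rw [hkey, smul_mul_smul_comm, inv_mul_cancel₀ hpos.ne', one_smul,
        Ring.inverse_mul_cancel _ (isUnit_one_sub_of_norm_lt_one hTn)]
    · intro i j
      have := inverse_one_sub_nonneg _ hT hTn i j
      have h2 : 0 ≤ (μ + c)⁻¹ := inv_nonneg.2 hpos.le
      simp only [Matrix.smul_apply, smul_eq_mul]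
      exact mul_nonneg h2 this
  have hbigP : ∀ μ : ℝ, ‖N‖ < μ + c →
      ∀ i j, 0 ≤ Ring.inverse (μ • (1 : Matrix (Fin n) (Fin n) ℝ) - M) i j := by
    intro μ hμ
    obtain ⟨h1, h1', h2⟩ := hbig μ hμ
    rw [ring_inverse_eq _ _ h1 h1']
    exact h2
  -- downward continuation
  set P : ℝ → Prop := fun μ => ∀ i j,
    0 ≤ Ring.inverse (μ • (1 : Matrix (Fin n) (Fin n) ℝ) - M) i j with hP
  set U : Set ℝ := {μ | l ≤ μ ∧ ∀ ν, μ ≤ ν → P ν} with hU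
  have hUne : (max l (‖N‖ - c + 1)) ∈ U := by
    refine ⟨le_max_left _ _, fun ν hν => ?_⟩
    refine hbigP ν ?_
    have : ‖N‖ - c + 1 ≤ ν := le_trans (le_max_right _ _) hν
    linarith
  have hUbdd : BddBelow U := ⟨l, fun μ hμ => hμ.1⟩
  set lam : ℝ := sInf U with hlam
  have hlam_ge : l ≤ lam := le_csInf ⟨_, hUne⟩ fun μ hμ => hμ.1
  have hdown : ∀ μ, lam < μ → P μ := by
    intro μ hμ
    obtain ⟨ν, hν, hνμ⟩ := (csInf_lt_iff hUbdd ⟨_, hUne⟩).1 hμ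
    exact hν.2 μ hνμ.le
  -- continuity gives P lam
  have hulam : IsUnit (lam • (1 : Matrix (Fin n) (Fin n) ℝ) - M) :=
    isUnit_of_specBound_lt M (lt_of_lt_of_le hl hlam_ge)
  have hPlam : P lam := by
    intro i j
    have hcont : ContinuousAt
        (fun μ : ℝ => Ring.inverse (μ • (1 : Matrix (Fin n) (Fin n) ℝ) - M) i j) lam := by
      have h1 : ContinuousAt (fun μ : ℝ => μ • (1 : Matrix (Fin n) (Fin n) ℝ) - M) lam :=
        ((continuousAt_id.smul continuousAt_const).sub continuousAt_const)
      obtain ⟨u, hu⟩ := hulam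
      have h2 : ContinuousAt Ring.inverse
          (lam • (1 : Matrix (Fin n) (Fin n) ℝ) - M) := by
        rw [← hu]
        exact NormedRing.inverse_continuousAt u
      have h3 : ContinuousAt
          (fun μ : ℝ => Ring.inverse (μ • (1 : Matrix (Fin n) (Fin n) ℝ) - M)) lam :=
        ContinuousAt.comp (x := lam)
        (g := Ring.inverse)
        (f := fun μ : ℝ => μ • (1 : Matrix (Fin n) (Fin n) ℝ) - M) h2 h1
      exact ContinuousAt.comp ((entryCLM i j).continuous.continuousAt) h3
    have htend : Tendsto
        (fun μ : ℝ => Ring.inverse (μ • (1 : Matrix (Fin n) (Fin n) ℝ) - M) i j)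
        (nhdsWithin lam (Set.Ioi lam))
        (nhds (Ring.inverse (lam • (1 : Matrix (Fin n) (Fin n) ℝ) - M) i j)) :=
      hcont.continuousWithinAt
    refine ge_of_tendsto htend ?_
    filter_upwards [self_mem_nhdsWithin] with μ hμ
    exact hdown μ hμ i j
  -- lam ≤ l
  have hlaml : lam ≤ l := by
    by_contra hgt
    push_neg at hgt
    set R : Matrix (Fin n) (Fin n) ℝ :=
      Ring.inverse (lam • (1 : Matrix (Fin n) (Fin n) ℝ) - M) with hR
    have hRnn : ∀ i j, 0 ≤ R i j := hPlam
    set d : ℝ := min ((lam - l) / 2) (1 / (2 * (‖R‖ + 1))) with hd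
    have hd0 : 0 < d := by
      refine lt_min (by linarith) ?_
      positivity
    have hstep : ∀ μ, lam - d ≤ μ → μ ≤ lam → P μ := by
      intro μ hμ1 hμ2
      have hTnn : ∀ i j, 0 ≤ ((lam - μ) • R) i j := fun i j =>
        mul_nonneg (by linarith) (hRnn i j)
      have hTn : ‖(lam - μ) • R‖ < 1 := by
        rw [norm_smul, Real.norm_eq_abs, abs_of_nonneg (by linarith : (0:ℝ) ≤ lam - μ)]
        have h1 : lam - μ ≤ d := by linarith
        have h2 : d * ‖R‖ < 1 := by
          have h3 : d ≤ 1 / (2 * (‖R‖ + 1)) := min_le_right _ _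
          have h4 : 0 ≤ ‖R‖ := norm_nonneg _
          have h5 : d * ‖R‖ ≤ (1 / (2 * (‖R‖ + 1))) * ‖R‖ :=
            mul_le_mul_of_nonneg_right h3 h4
          have h6 : (1 / (2 * (‖R‖ + 1))) * ‖R‖ < 1 := by
            rw [div_mul_eq_mul_div, div_lt_one (by positivity)]
            nlinarith
          linarith
        calc (lam - μ) * ‖R‖ ≤ d * ‖R‖ := mul_le_mul_of_nonneg_right h1 (norm_nonneg _)
          _ < 1 := h2
      have hkey : μ • (1 : Matrix (Fin n) (Fin n) ℝ) - M
          = (lam • (1 : Matrix (Fin n) (Fin n) ℝ) - M) * (1 - (lam - μ) • R) := by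
        rw [mul_sub, mul_one, mul_smul_comm,
          Ring.mul_inverse_cancel _ hulam]
        ext i j
        by_cases h : i = j <;>
          simp [Matrix.one_apply, h, Matrix.sub_apply, Matrix.smul_apply] <;> ring
      have hinv1 : (1 - (lam - μ) • R) * (Ring.inverse (1 - (lam - μ) • R)) = 1 :=
        Ring.mul_inverse_cancel _ (isUnit_one_sub_of_norm_lt_one hTn)
      have hinv2 : (Ring.inverse (1 - (lam - μ) • R)) * (1 - (lam - μ) • R) = 1 :=
        Ring.inverse_mul_cancel _ (isUnit_one_sub_of_norm_lt_one hTn)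
      have hR1 : (lam • (1 : Matrix (Fin n) (Fin n) ℝ) - M) * R = 1 :=
        Ring.mul_inverse_cancel _ hulam
      have hR2 : R * (lam • (1 : Matrix (Fin n) (Fin n) ℝ) - M) = 1 :=
        Ring.inverse_mul_cancel _ hulam
      have hmul1 : (μ • (1 : Matrix (Fin n) (Fin n) ℝ) - M) *
          ((Ring.inverse (1 - (lam - μ) • R)) * R) = 1 := by
        rw [hkey]
        calc (lam • (1:Matrix (Fin n) (Fin n) ℝ) - M) * (1 - (lam - μ) • R) *
            ((Ring.inverse (1 - (lam - μ) • R)) * R)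
            = (lam • (1:Matrix (Fin n) (Fin n) ℝ) - M) *
              (((1 - (lam - μ) • R) * (Ring.inverse (1 - (lam - μ) • R))) * R) := by
              simp only [mul_assoc]
          _ = 1 := by rw [hinv1, one_mul, hR1]
      have hmul2 : ((Ring.inverse (1 - (lam - μ) • R)) * R) *
          (μ • (1 : Matrix (Fin n) (Fin n) ℝ) - M) = 1 := by
        rw [hkey]
        calc (Ring.inverse (1 - (lam - μ) • R)) * R *
            ((lam • (1:Matrix (Fin n) (Fin n) ℝ) - M) * (1 - (lam - μ) • R))
            = (Ring.inverse (1 - (lam - μ) • R)) *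
              ((R * (lam • (1:Matrix (Fin n) (Fin n) ℝ) - M)) * (1 - (lam - μ) • R)) := by
              simp only [mul_assoc]
          _ = 1 := by rw [hR2, one_mul, hinv2]
      intro i j
      rw [ring_inverse_eq _ _ hmul1 hmul2]
      exact mul_entry_nonneg (inverse_one_sub_nonneg _ hTnn hTn) hRnn i j
    have hmem : (lam - d) ∈ U := by
      constructor
      · have : d ≤ (lam - l)/2 := min_le_left _ _
        linarith
      · intro ν hν
        rcases lt_or_ge lam ν with h | h
        · exact hdown ν h
        · exact hstep ν hν h
    have := csInf_le hUbdd hmem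
    rw [← hlam] at this
    linarith
  -- conclude
  rcases eq_or_lt_of_le hlaml with h | h
  · rw [← h]; exact hPlam
  · exact hdown l h

lemma exists_subeigen [Nonempty (Fin n)] (M : Matrix (Fin n) (Fin n) ℝ)
    (hq : ∀ i j, i ≠ j → 0 ≤ M i j) {l : ℝ} (hl : specBound M < l) :
    ∃ x : Fin n → ℝ, (∀ i, 0 < x i) ∧ ∀ i, (M *ᵥ x) i ≤ l * x i := by
  classical
  set R : Matrix (Fin n) (Fin n) ℝ :=
    Ring.inverse (l • (1 : Matrix (Fin n) (Fin n) ℝ) - M) with hR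
  have hRnn : ∀ i j, 0 ≤ R i j := resolvent_nonneg M hq hl
  have hu : IsUnit (l • (1 : Matrix (Fin n) (Fin n) ℝ) - M) := isUnit_of_specBound_lt M hl
  have hR2 : R * (l • (1 : Matrix (Fin n) (Fin n) ℝ) - M) = 1 := Ring.inverse_mul_cancel _ hu
  have hR1 : (l • (1 : Matrix (Fin n) (Fin n) ℝ) - M) * R = 1 := Ring.mul_inverse_cancel _ hu
  refine ⟨R *ᵥ (fun _ => 1), ?_, ?_⟩
  · intro i
    have hnn : 0 ≤ (R *ᵥ (fun _ => 1)) i := by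
      simp only [Matrix.mulVec, dotProduct]
      exact Finset.sum_nonneg fun j _ => by simpa using hRnn i j
    rcases hnn.lt_or_eq with h | h
    · exact h
    · exfalso
      have hrow : ∀ j, R i j = 0 := by
        have h0 : ∑ j, R i j = 0 := by
          have := h.symm
          simpa [Matrix.mulVec, dotProduct] using this
        intro j
        have := (Finset.sum_eq_zero_iff_of_nonneg (fun j _ => hRnn i j)).1 h0 j
          (Finset.mem_univ j)
        exact this
      have : (R * (l • (1 : Matrix (Fin n) (Fin n) ℝ) - M)) i i = 0 := by
        rw [Matrix.mul_apply]
        exact Finset.sum_eq_zero fun k _ => by rw [hrow k, zero_mul]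
      rw [hR2] at this
      simp [Matrix.one_apply] at this
  · intro i
    have hv : (l • (1 : Matrix (Fin n) (Fin n) ℝ) - M) *ᵥ (R *ᵥ (fun _ => 1))
        = fun _ => (1:ℝ) := by
      rw [Matrix.mulVec_mulVec, hR1]
      ext i
      simp [Matrix.mulVec, dotProduct, Matrix.one_apply]
    have := congrFun hv i
    simp only [Matrix.sub_mulVec, Matrix.smul_mulVec, Matrix.one_mulVec, Pi.sub_apply,
      Pi.smul_apply, smul_eq_mul] at this
    linarith

lemma specBound_le_of_subeigen [Nonempty (Fin n)] (M : Matrix (Fin n) (Fin n) ℝ)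
    (hq : ∀ i j, i ≠ j → 0 ≤ M i j) (x : Fin n → ℝ) (hx : ∀ i, 0 < x i) (l : ℝ)
    (hle : ∀ i, (M *ᵥ x) i ≤ l * x i) : specBound M ≤ l := by
  refine specBound_le M fun z hz => ?_
  rw [mem_spectrum_iff] at hz
  -- get eigenvector
  have hdet : (z • (1 : Matrix (Fin n) (Fin n) ℂ) - M.map Complex.ofReal).det = 0 := by
    by_contra hd
    exact hz ((Matrix.isUnit_iff_isUnit_det _).2 (isUnit_iff_ne_zero.2 hd))
  obtain ⟨v, hv0, hv⟩ := (Matrix.exists_mulVec_eq_zero_iff).2 hdet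
  have heig : ∀ i, ∑ j, (M i j : ℂ) * v j = z * v i := by
    intro i
    have h := congrFun hv i
    simp only [Matrix.sub_mulVec, Matrix.smul_mulVec, Matrix.one_mulVec,
      Pi.sub_apply, Pi.smul_apply, smul_eq_mul, Pi.zero_apply] at h
    have h2 : ((M.map Complex.ofReal) *ᵥ v) i = z * v i := by
      exact (sub_eq_zero.mp h).symm
    simpa [Matrix.mulVec, dotProduct, Matrix.map_apply] using h2
  -- maximizing index
  obtain ⟨i, -, hi⟩ := Finset.exists_max_image Finset.univ
    (fun j => ‖v j‖ / x j) ⟨Classical.arbitrary _, Finset.mem_univ _⟩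
  set m := ‖v i‖ / x i with hm
  have hvlek : ∀ j, ‖v j‖ ≤ m * x j := by
    intro j
    exact (div_le_iff₀ (hx j)).1 (hi j (Finset.mem_univ j))
  have hm0 : 0 < m := by
    obtain ⟨j, hj⟩ : ∃ j, v j ≠ 0 := Function.ne_iff.1 hv0
    have h1 : 0 < ‖v j‖ := norm_pos_iff.mpr hj
    exact lt_of_lt_of_le (div_pos h1 (hx j)) (hi j (Finset.mem_univ j))
  have hvi : ‖v i‖ = m * x i := by
    rw [hm, div_mul_cancel₀ _ (hx i).ne']
  -- row estimate
  have hrow : ∑ j ∈ Finset.univ.erase i, M i j * x j ≤ (l - M i i) * x i := by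
    have h1 : ∑ j ∈ Finset.univ.erase i, M i j * x j + M i i * x i = ∑ j, M i j * x j :=
      Finset.sum_erase_add _ _ (Finset.mem_univ i)
    have h2 : ∑ j, M i j * x j ≤ l * x i := by
      have := hle i
      simpa [Matrix.mulVec, dotProduct] using this
    nlinarith
  have key : ‖z - M i i‖ * (m * x i) ≤ (l - M i i) * (m * x i) := by
    have hsplit : (z - (M i i : ℂ)) * v i = ∑ j ∈ Finset.univ.erase i, (M i j : ℂ) * v j := by
      have h1 : ∑ j ∈ Finset.univ.erase i, (M i j : ℂ) * v j + (M i i : ℂ) * v i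
          = ∑ j, (M i j : ℂ) * v j := Finset.sum_erase_add _ _ (Finset.mem_univ i)
      rw [heig] at h1
      linear_combination -h1
    calc ‖z - M i i‖ * (m * x i)
        = ‖(z - (M i i : ℂ)) * v i‖ := by rw [norm_mul, hvi]
      _ = ‖∑ j ∈ Finset.univ.erase i, (M i j : ℂ) * v j‖ := by rw [hsplit]
      _ ≤ ∑ j ∈ Finset.univ.erase i, ‖(M i j : ℂ) * v j‖ := by
          exact norm_sum_le _ _
      _ ≤ ∑ j ∈ Finset.univ.erase i, M i j * (m * x j) := by
          refine Finset.sum_le_sum fun j hj => ?_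
          have hij : i ≠ j := fun h => (Finset.mem_erase.1 hj).1 h.symm
          have hMij : 0 ≤ M i j := hq i j hij
          rw [norm_mul, Complex.norm_real, Real.norm_eq_abs, abs_of_nonneg hMij]
          exact mul_le_mul_of_nonneg_left (hvlek j) hMij
      _ = (∑ j ∈ Finset.univ.erase i, M i j * x j) * m := by
          rw [Finset.sum_mul]; congr 1; ext j; ring
      _ ≤ ((l - M i i) * x i) * m := mul_le_mul_of_nonneg_right hrow (le_of_lt hm0)
      _ = (l - M i i) * (m * x i) := by ring
  have habs : ‖z - M i i‖ ≤ l - M i i :=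
    le_of_mul_le_mul_right key (mul_pos hm0 (hx i))
  have := Complex.re_le_norm (z - (M i i : ℂ))
  simp only [Complex.sub_re, Complex.ofReal_re] at this
  linarith

lemma hoelder_sum (s : Finset (Fin n)) (u v : Fin n → ℝ) (hu : ∀ j ∈ s, 0 ≤ u j)
    (hv : ∀ j ∈ s, 0 ≤ v j) {a b : ℝ} (ha : 0 < a) (hb : 0 < b) (hab : a + b = 1) :
    ∑ j ∈ s, u j ^ a * v j ^ b ≤ (∑ j ∈ s, u j) ^ a * (∑ j ∈ s, v j) ^ b := by
  rcases eq_or_lt_of_le (Finset.sum_nonneg hu) with h1 | h1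
  · have hz : ∀ j ∈ s, u j = 0 := fun j hj =>
      (Finset.sum_eq_zero_iff_of_nonneg hu).1 h1.symm j hj
    have : ∑ j ∈ s, u j ^ a * v j ^ b = 0 := Finset.sum_eq_zero fun j hj => by
      rw [hz j hj, Real.zero_rpow ha.ne', zero_mul]
    rw [this, ← h1, Real.zero_rpow ha.ne', zero_mul]
  rcases eq_or_lt_of_le (Finset.sum_nonneg hv) with h2 | h2
  · have hz : ∀ j ∈ s, v j = 0 := fun j hj =>
      (Finset.sum_eq_zero_iff_of_nonneg hv).1 h2.symm j hj
    have : ∑ j ∈ s, u j ^ a * v j ^ b = 0 := Finset.sum_eq_zero fun j hj => by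
      rw [hz j hj, Real.zero_rpow hb.ne', mul_zero]
    rw [this, ← h2, Real.zero_rpow hb.ne', mul_zero]
  set S1 := ∑ j ∈ s, u j
  set S2 := ∑ j ∈ s, v j
  have key : ∑ j ∈ s, (u j / S1) ^ a * (v j / S2) ^ b ≤ 1 := by
    calc ∑ j ∈ s, (u j / S1) ^ a * (v j / S2) ^ b
        ≤ ∑ j ∈ s, (a * (u j / S1) + b * (v j / S2)) := by
          refine Finset.sum_le_sum fun j hj => ?_
          exact Real.geom_mean_le_arith_mean2_weighted ha.le hb.le
            (div_nonneg (hu j hj) h1.le) (div_nonneg (hv j hj) h2.le) hab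
      _ = a * (S1 / S1) + b * (S2 / S2) := by
          rw [Finset.sum_add_distrib, ← Finset.mul_sum, ← Finset.mul_sum,
            ← Finset.sum_div, ← Finset.sum_div]
      _ = 1 := by rw [div_self h1.ne', div_self h2.ne', mul_one, mul_one, hab]
  have expand : ∀ j ∈ s, (u j / S1) ^ a * (v j / S2) ^ b
      = u j ^ a * v j ^ b / (S1 ^ a * S2 ^ b) := by
    intro j hj
    rw [Real.div_rpow (hu j hj) h1.le, Real.div_rpow (hv j hj) h2.le]
    field_simp
  rw [Finset.sum_congr rfl expand, ← Finset.sum_div, div_le_one (by positivity)] at key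
  linarith

lemma cohen [Nonempty (Fin n)] (A : Matrix (Fin n) (Fin n) ℝ)
    (hA : ∀ i j, i ≠ j → 0 ≤ A i j) (q : Fin n → ℝ) (v1 v2 a b : ℝ)
    (ha : 0 ≤ a) (hb : 0 ≤ b) (hab : a + b = 1) :
    specBound (A + Matrix.diagonal ((a * v1 + b * v2) • q))
      ≤ a * specBound (A + Matrix.diagonal (v1 • q))
        + b * specBound (A + Matrix.diagonal (v2 • q)) := by
  classical
  rcases eq_or_lt_of_le ha with ha0 | ha0
  · have hb1 : b = 1 := by linarith
    rw [← ha0, hb1]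
    norm_num
  rcases eq_or_lt_of_le hb with hb0 | hb0
  · have ha1 : a = 1 := by linarith
    rw [← hb0, ha1]
    norm_num
  -- quasi-positivity of the three matrices
  have hqp : ∀ w : ℝ, ∀ i j, i ≠ j → 0 ≤ (A + Matrix.diagonal (w • q)) i j := by
    intro w i j hij
    rw [Matrix.add_apply, Matrix.diagonal_apply_ne _ hij, add_zero]
    exact hA i j hij
  set M1 := A + Matrix.diagonal (v1 • q) with hM1
  set M2 := A + Matrix.diagonal (v2 • q) with hM2
  set Mb := A + Matrix.diagonal ((a * v1 + b * v2) • q) with hMb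
  refine le_of_forall_pos_le_add fun ε hε => ?_
  obtain ⟨x1, hx1pos, hx1⟩ := exists_subeigen M1 (hqp v1) (lt_add_of_pos_right _ hε)
  obtain ⟨x2, hx2pos, hx2⟩ := exists_subeigen M2 (hqp v2) (lt_add_of_pos_right _ hε)
  set l1 := specBound M1 + ε with hl1
  set l2 := specBound M2 + ε with hl2
  set x : Fin n → ℝ := fun j => x1 j ^ a * x2 j ^ b with hx
  have hxpos : ∀ j, 0 < x j := fun j =>
    mul_pos (Real.rpow_pos_of_pos (hx1pos j) a) (Real.rpow_pos_of_pos (hx2pos j) b)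
  have hrow : ∀ i, (Mb *ᵥ x) i ≤ (a * l1 + b * l2) * x i := by
    intro i
    -- the off-diagonal sums
    set c1 : ℝ := l1 - M1 i i with hc1
    set c2 : ℝ := l2 - M2 i i with hc2
    have hsum1 : ∑ j ∈ Finset.univ.erase i, A i j * x1 j ≤ c1 * x1 i := by
      have h1 : ∑ j ∈ Finset.univ.erase i, M1 i j * x1 j + M1 i i * x1 i
          = ∑ j, M1 i j * x1 j := Finset.sum_erase_add _ _ (Finset.mem_univ i)
      have h2 : ∑ j, M1 i j * x1 j ≤ l1 * x1 i := by
        have := hx1 i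
        simpa [Matrix.mulVec, dotProduct] using this
      have h3 : ∑ j ∈ Finset.univ.erase i, M1 i j * x1 j
          = ∑ j ∈ Finset.univ.erase i, A i j * x1 j := by
        refine Finset.sum_congr rfl fun j hj => ?_
        have hij : i ≠ j := fun h => (Finset.mem_erase.1 hj).1 h.symm
        rw [hM1, Matrix.add_apply, Matrix.diagonal_apply_ne _ hij, add_zero]
      rw [h3] at h1
      rw [hc1]
      nlinarith
    have hsum2 : ∑ j ∈ Finset.univ.erase i, A i j * x2 j ≤ c2 * x2 i := by
      have h1 : ∑ j ∈ Finset.univ.erase i, M2 i j * x2 j + M2 i i * x2 i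
          = ∑ j, M2 i j * x2 j := Finset.sum_erase_add _ _ (Finset.mem_univ i)
      have h2 : ∑ j, M2 i j * x2 j ≤ l2 * x2 i := by
        have := hx2 i
        simpa [Matrix.mulVec, dotProduct] using this
      have h3 : ∑ j ∈ Finset.univ.erase i, M2 i j * x2 j
          = ∑ j ∈ Finset.univ.erase i, A i j * x2 j := by
        refine Finset.sum_congr rfl fun j hj => ?_
        have hij : i ≠ j := fun h => (Finset.mem_erase.1 hj).1 h.symm
        rw [hM2, Matrix.add_apply, Matrix.diagonal_apply_ne _ hij, add_zero]
      rw [h3] at h1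
      rw [hc2]
      nlinarith
    have hoffnn1 : (0:ℝ) ≤ ∑ j ∈ Finset.univ.erase i, A i j * x1 j :=
      Finset.sum_nonneg fun j hj => mul_nonneg
        (hA i j fun h => (Finset.mem_erase.1 hj).1 h.symm) (hx1pos j).le
    have hoffnn2 : (0:ℝ) ≤ ∑ j ∈ Finset.univ.erase i, A i j * x2 j :=
      Finset.sum_nonneg fun j hj => mul_nonneg
        (hA i j fun h => (Finset.mem_erase.1 hj).1 h.symm) (hx2pos j).le
    have hc1nn : 0 ≤ c1 := by
      have h := le_trans hoffnn1 hsum1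
      exact nonneg_of_mul_nonneg_right (mul_comm c1 (x1 i) ▸ h) (hx1pos i)
    have hc2nn : 0 ≤ c2 := by
      have h := le_trans hoffnn2 hsum2
      exact nonneg_of_mul_nonneg_right (mul_comm c2 (x2 i) ▸ h) (hx2pos i)
    -- Hölder estimate on the off-diagonal part
    have hterm : ∀ j ∈ Finset.univ.erase i,
        A i j * x j = (A i j * x1 j) ^ a * (A i j * x2 j) ^ b := by
      intro j hj
      have hij : i ≠ j := fun h => (Finset.mem_erase.1 hj).1 h.symm
      have hAij : 0 ≤ A i j := hA i j hij
      rw [Real.mul_rpow hAij (hx1pos j).le, Real.mul_rpow hAij (hx2pos j).le]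
      have : A i j ^ a * A i j ^ b = A i j := by
        rw [← Real.rpow_add' hAij (by rw [hab]; norm_num), hab, Real.rpow_one]
      calc A i j * x j = (A i j ^ a * A i j ^ b) * (x1 j ^ a * x2 j ^ b) := by
            rw [this, hx]
        _ = A i j ^ a * x1 j ^ a * (A i j ^ b * x2 j ^ b) := by ring
    have hT : ∑ j ∈ Finset.univ.erase i, A i j * x j
        ≤ (c1 * x1 i) ^ a * (c2 * x2 i) ^ b := by
      rw [Finset.sum_congr rfl hterm]
      refine le_trans (hoelder_sum _ _ _
        (fun j hj => mul_nonneg (hA i j fun h => (Finset.mem_erase.1 hj).1 h.symm)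
          (hx1pos j).le)
        (fun j hj => mul_nonneg (hA i j fun h => (Finset.mem_erase.1 hj).1 h.symm)
          (hx2pos j).le) ha0 hb0 hab) ?_
      have h1 : (∑ j ∈ Finset.univ.erase i, A i j * x1 j) ^ a ≤ (c1 * x1 i) ^ a :=
        Real.rpow_le_rpow hoffnn1 hsum1 ha
      have h2 : (∑ j ∈ Finset.univ.erase i, A i j * x2 j) ^ b ≤ (c2 * x2 i) ^ b :=
        Real.rpow_le_rpow hoffnn2 hsum2 hb
      exact mul_le_mul h1 h2 (Real.rpow_nonneg hoffnn2 b) (Real.rpow_nonneg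
        (mul_nonneg hc1nn (hx1pos i).le) a)
    have hgm : (c1 * x1 i) ^ a * (c2 * x2 i) ^ b ≤ (a * c1 + b * c2) * x i := by
      rw [Real.mul_rpow hc1nn (hx1pos i).le, Real.mul_rpow hc2nn (hx2pos i).le]
      calc c1 ^ a * x1 i ^ a * (c2 ^ b * x2 i ^ b)
          = (c1 ^ a * c2 ^ b) * x i := by rw [hx]; ring
        _ ≤ (a * c1 + b * c2) * x i :=
            mul_le_mul_of_nonneg_right
              (Real.geom_mean_le_arith_mean2_weighted ha hb hc1nn hc2nn hab)
              (hxpos i).le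
    -- assemble the row
    have hMbdiag : Mb i i = A i i + (a * v1 + b * v2) * q i := by
      rw [hMb, Matrix.add_apply, Matrix.diagonal_apply_eq]
      simp
    have hM1diag : M1 i i = A i i + v1 * q i := by
      rw [hM1, Matrix.add_apply, Matrix.diagonal_apply_eq]; simp
    have hM2diag : M2 i i = A i i + v2 * q i := by
      rw [hM2, Matrix.add_apply, Matrix.diagonal_apply_eq]; simp
    have hsplit : (Mb *ᵥ x) i = Mb i i * x i + ∑ j ∈ Finset.univ.erase i, A i j * x j := by
      have h1 : ∑ j ∈ Finset.univ.erase i, Mb i j * x j + Mb i i * x i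
          = ∑ j, Mb i j * x j := Finset.sum_erase_add _ _ (Finset.mem_univ i)
      have h3 : ∑ j ∈ Finset.univ.erase i, Mb i j * x j
          = ∑ j ∈ Finset.univ.erase i, A i j * x j := by
        refine Finset.sum_congr rfl fun j hj => ?_
        have hij : i ≠ j := fun h => (Finset.mem_erase.1 hj).1 h.symm
        rw [hMb, Matrix.add_apply, Matrix.diagonal_apply_ne _ hij, add_zero]
      rw [h3] at h1
      simp only [Matrix.mulVec, dotProduct]
      linarith
    have hs : Mb i i + (a * c1 + b * c2) = a * l1 + b * l2 := by
      rw [hMbdiag, hc1, hc2, hM1diag, hM2diag]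
      linear_combination (-(A i i)) * hab
    calc (Mb *ᵥ x) i = Mb i i * x i + ∑ j ∈ Finset.univ.erase i, A i j * x j := hsplit
      _ ≤ Mb i i * x i + (a * c1 + b * c2) * x i := by linarith [le_trans hT hgm]
      _ = (Mb i i + (a * c1 + b * c2)) * x i := by ring
      _ = (a * l1 + b * l2) * x i := by rw [hs]
  have := specBound_le_of_subeigen Mb (hqp _) x hxpos (a * l1 + b * l2) hrow
  rw [hl1, hl2] at this
  calc specBound Mb ≤ a * (specBound M1 + ε) + b * (specBound M2 + ε) := this
    _ = a * specBound M1 + b * specBound M2 + ε := by linear_combination ε * hab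

end SB8

/-- For a (not necessarily irreducible) quasi-positive matrix `A` with `s(A) ≤ 0` and
`Q = diagonal q`, the map `μ ↦ s(μA + Q)` is nonincreasing and convex on `(0,∞)`. -/
theorem stmt8 {n : ℕ} (A : Matrix (Fin n) (Fin n) ℝ)
    (hA_qp : ∀ i j, i ≠ j → 0 ≤ A i j)
    (hsA : specBound A ≤ 0)
    (q : Fin n → ℝ) :
    AntitoneOn (fun μ : ℝ => specBound (μ • A + Matrix.diagonal q)) (Set.Ioi 0) ∧
    ConvexOn ℝ (Set.Ioi 0)
      (fun μ : ℝ => specBound (μ • A + Matrix.diagonal q)) := by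
  classical
  rcases isEmpty_or_nonempty (Fin n) with hE | hE
  · have hconst : (fun μ : ℝ => specBound (μ • A + Matrix.diagonal q))
        = fun _ : ℝ => (0:ℝ) := funext fun μ => SB8.specBound_of_isEmpty _
    rw [hconst]
    exact ⟨fun _ _ _ _ _ => le_rfl, convexOn_const 0 (convex_Ioi 0)⟩
  -- the scaling identity
  have key : ∀ μ : ℝ, 0 < μ → specBound (μ • A + Matrix.diagonal q)
      = μ * specBound (A + Matrix.diagonal (μ⁻¹ • q)) := by
    intro μ hμ
    have h1 : μ • A + Matrix.diagonal q = μ • (A + Matrix.diagonal (μ⁻¹ • q)) := by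
      rw [smul_add]
      congr 1
      ext i j
      by_cases h : i = j
      · subst h
        simp [Matrix.diagonal_apply_eq, mul_inv_cancel₀ hμ.ne', ← mul_assoc]
      · simp [Matrix.diagonal_apply_ne _ h]
    rw [h1, SB8.specBound_smul _ hμ]
  have hg0 : specBound (A + Matrix.diagonal ((0:ℝ) • q)) = specBound A := by
    have hd : Matrix.diagonal ((0:ℝ) • q) = 0 := by
      ext i j; by_cases h : i = j <;> simp [h]
    rw [hd, add_zero]
  constructor
  · -- antitone
    intro μ1 h1 μ2 h2 h12
    simp only [Set.mem_Ioi] at h1 h2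
    set a : ℝ := μ1 / μ2 with hadef
    have ha0 : 0 < a := div_pos h1 h2
    have ha1 : a ≤ 1 := (div_le_one h2).2 h12
    have hco := SB8.cohen A hA_qp q (1/μ1) 0 a (1 - a) ha0.le (by linarith) (by ring)
    have harm : a * (1/μ1) + (1 - a) * 0 = μ2⁻¹ := by
      rw [hadef]
      field_simp
      ring
    rw [harm, hg0] at hco
    have hb : (1 - a) * specBound A ≤ 0 :=
      mul_nonpos_of_nonneg_of_nonpos (by linarith) hsA
    have hle : specBound (A + Matrix.diagonal (μ2⁻¹ • q))
        ≤ a * specBound (A + Matrix.diagonal ((1/μ1) • q)) := by linarith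
    show specBound (μ2 • A + Matrix.diagonal q) ≤ specBound (μ1 • A + Matrix.diagonal q)
    rw [key μ1 h1, key μ2 h2]
    have h1μ : (1:ℝ)/μ1 = μ1⁻¹ := one_div μ1
    rw [← h1μ]
    calc μ2 * specBound (A + Matrix.diagonal (μ2⁻¹ • q))
        ≤ μ2 * (a * specBound (A + Matrix.diagonal ((1/μ1) • q))) :=
          mul_le_mul_of_nonneg_left hle h2.le
      _ = μ1 * specBound (A + Matrix.diagonal ((1/μ1) • q)) := by
          rw [hadef]; field_simp
  · -- convex
    refine ⟨convex_Ioi 0, ?_⟩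
    intro μ1 h1 μ2 h2 a b ha hb hab
    simp only [Set.mem_Ioi] at h1 h2
    simp only [smul_eq_mul]
    have hμ : 0 < a * μ1 + b * μ2 := by
      rcases eq_or_lt_of_le ha with h | h
      · have : b = 1 := by linarith
        rw [← h, this]; simpa using h2
      · have hb2 : 0 ≤ b * μ2 := mul_nonneg hb h2.le
        nlinarith
    set μ : ℝ := a * μ1 + b * μ2 with hμdef
    set a' : ℝ := a * μ1 / μ with ha'def
    set b' : ℝ := b * μ2 / μ with hb'def
    have ha' : 0 ≤ a' := div_nonneg (mul_nonneg ha h1.le) hμ.le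
    have hb' : 0 ≤ b' := div_nonneg (mul_nonneg hb h2.le) hμ.le
    have hab' : a' + b' = 1 := by
      rw [ha'def, hb'def, ← add_div, hμdef, div_self hμ.ne']
    have harm : a' * (1/μ1) + b' * (1/μ2) = μ⁻¹ := by
      have e1 : a' * (1/μ1) = a / μ := by rw [ha'def]; field_simp
      have e2 : b' * (1/μ2) = b / μ := by rw [hb'def]; field_simp
      rw [e1, e2, ← add_div, hab, ← one_div]
    have hco := SB8.cohen A hA_qp q (1/μ1) (1/μ2) a' b' ha' hb' hab'
    rw [harm] at hco
    rw [key μ1 h1, key μ2 h2, key μ hμ]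
    have h1μ : (1:ℝ)/μ1 = μ1⁻¹ := one_div μ1
    have h2μ : (1:ℝ)/μ2 = μ2⁻¹ := one_div μ2
    rw [← h1μ, ← h2μ]
    calc μ * specBound (A + Matrix.diagonal (μ⁻¹ • q))
        ≤ μ * (a' * specBound (A + Matrix.diagonal ((1/μ1) • q))
            + b' * specBound (A + Matrix.diagonal ((1/μ2) • q))) :=
          mul_le_mul_of_nonneg_left hco hμ.le
      _ = a * (μ1 * specBound (A + Matrix.diagonal ((1/μ1) • q)))
            + b * (μ2 * specBound (A + Matrix.diagonal ((1/μ2) • q))) := by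
          rw [ha'def, hb'def]
          field_simp
end

section
/- Let μ, μ′ > 0 and let u_1, …, u_n > 0 be real numbers that are pairwise distinct (u_i ≠ u_j whenever i ≠ j). Then there exist positive real numbers k_1, …, k_n such that for all i ≠ j: u_j(μ + μ′)/(μ′u_i + μu_j) < k_i/k_j < (μ′u_j + μu_i)/(u_i(μ + μ′)). -/
open Matrix Filter

/-- Given `μ, μ' > 0` and pairwise distinct positive reals `u 1, …, u n`, there exist
positive `k 1, …, k n` with
`u j (μ+μ') / (μ' u i + μ u j) < k i / k j < (μ' u j + μ u i) / (u i (μ+μ'))`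
for all `i ≠ j`. -/
theorem stmt9 {n : ℕ} (hn : 1 ≤ n) (μ μ' : ℝ) (hμ : 0 < μ) (hμ' : 0 < μ')
    (u : Fin n → ℝ) (hu : ∀ i, 0 < u i)
    (hu_distinct : ∀ i j, i ≠ j → u i ≠ u j) :
    ∃ k : Fin n → ℝ, (∀ i, 0 < k i) ∧
      ∀ i j, i ≠ j →
        u j * (μ + μ') / (μ' * u i + μ * u j) < k i / k j ∧
        k i / k j < (μ' * u j + μ * u i) / (u i * (μ + μ')) := by
  have hspos : (0:ℝ) < μ + μ' := by linarith
  set a : ℝ := μ' / (μ + μ') with ha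
  have ha0 : 0 < a := by positivity
  have ha1 : a < 1 := by
    rw [ha, div_lt_one hspos]; linarith
  have hsa : (μ + μ') * a = μ' := by rw [ha]; field_simp
  have hsa' : (μ + μ') * (1 - a) = μ := by rw [mul_sub, mul_one, hsa]; ring
  have key : ∀ t θ : ℝ, 0 < t → t ≠ 1 → 0 < θ → θ < 1 →
      t ^ θ < θ * t + (1 - θ) := by
    intro t θ ht ht1 hθ0 hθ1
    have hlog : Real.log t ≠ 0 := by
      intro h
      rcases Real.log_eq_zero.mp h with h' | h' | h'
      · linarith
      · exact ht1 h'
      · linarith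
    have hc := strictConvexOn_exp.2 (Set.mem_univ (Real.log t)) (Set.mem_univ (0:ℝ))
      hlog hθ0 (by linarith : (0:ℝ) < 1 - θ) (by ring)
    simp only [smul_eq_mul, mul_zero, add_zero, Real.exp_zero, mul_one] at hc
    calc t ^ θ = Real.exp (Real.log t * θ) := by
          rw [Real.rpow_def_of_pos ht]
        _ = Real.exp (θ * Real.log t) := by ring_nf
        _ < θ * Real.exp (Real.log t) + (1 - θ) := hc
        _ = θ * t + (1 - θ) := by rw [Real.exp_log ht]
  refine ⟨fun i => u i ^ (-a), fun i => Real.rpow_pos_of_pos (hu i) _, ?_⟩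
  intro i j hij
  have hui : 0 < u i := hu i
  have huj : 0 < u j := hu j
  set t : ℝ := u i / u j with htdef
  have ht : 0 < t := by positivity
  have ht1 : t ≠ 1 := by
    intro h
    apply hu_distinct i j hij
    rw [htdef, div_eq_one_iff_eq huj.ne'] at h
    exact h
  have htuj : t * u j = u i := by
    rw [htdef]; field_simp
  have hquot : u i ^ (-a) / u j ^ (-a) = t ^ (-a) := by
    rw [htdef, Real.div_rpow hui.le huj.le]
  have hA : 0 < t ^ a := Real.rpow_pos_of_pos ht a
  have hneg : t ^ (-a) = (t ^ a)⁻¹ := Real.rpow_neg ht.le a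
  have kA : t ^ a < a * t + (1 - a) := key t a ht ht1 ha0 ha1
  have kB : t ^ (1 - a) < (1 - a) * t + (1 - (1 - a)) :=
    key t (1 - a) ht ht1 (by linarith) (by linarith)
  have hAB : t ^ a * t ^ (1 - a) = t := by
    rw [← Real.rpow_add ht]; norm_num
  constructor
  · rw [hquot, hneg, ← one_div,
      div_lt_div_iff₀ (by positivity) hA]
    have h1 : (μ + μ') * t ^ a < μ' * t + μ := by
      nlinarith [kA]
    have h2 : u j * ((μ + μ') * t ^ a) < u j * (μ' * t + μ) :=
      (mul_lt_mul_iff_right₀ huj).mpr h1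
    nlinarith [h2, htuj]
  · rw [hquot, hneg, ← one_div,
      div_lt_div_iff₀ hA (by positivity)]
    have h1 : (μ + μ') * t ^ (1 - a) < μ * t + μ' := by
      nlinarith [kB]
    have h2 : t ^ a * ((μ + μ') * t ^ (1 - a)) < t ^ a * (μ * t + μ') :=
      (mul_lt_mul_iff_right₀ hA).mpr h1
    rw [show t ^ a * ((μ + μ') * t ^ (1 - a)) = (μ + μ') * (t ^ a * t ^ (1 - a)) by ring,
      hAB] at h2
    have h3 : u j * ((μ + μ') * t) < u j * (t ^ a * (μ * t + μ')) :=
      (mul_lt_mul_iff_right₀ huj).mpr h2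
    rw [show u j * ((μ + μ') * t) = (μ + μ') * (t * u j) by ring,
      show u j * (t ^ a * (μ * t + μ')) = t ^ a * (μ * (t * u j) + μ' * u j) by ring,
      htuj] at h3
    nlinarith [h3]
end
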